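/- arXiv:2207.01716 — 9 statements merged into one kernel-verified Lean document; each statement's English description precedes it below -/
import Mathlib

section
/- Assume that for every s₀ ≥ 0 and every N ≥ s₀ the function t ↦ ‖U(t,s₀)‖ is bounded on the compact interval [s₀,N] (as holds when U(·,s₀) is locally of bounded variation). Then the trivial solution of the homogeneous generalized linear differential equation is globally asymptotically stable if and only if for every s₀ ≥ 0 one has ‖U(t,s₀)‖ → 0 as t → +∞. -/
open scoped Matrix.Norms.L2Operator

lemma aux_le (n : ℕ) (A : Matrix (Fin n) (Fin n) ℝ) (x : EuclideanSpace ℝ (Fin n)) :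
    ‖Matrix.toEuclideanLin A x‖ ≤ ‖A‖ * ‖x‖ := by
  rw [Matrix.l2_opNorm_def]
  exact (Matrix.toEuclideanLin.trans LinearMap.toContinuousLinearMap A).le_opNorm x

lemma aux_coord (n : ℕ) (x : EuclideanSpace ℝ (Fin n)) (j : Fin n) : |x j| ≤ ‖x‖ := by
  have h := norm_inner_le_norm (𝕜 := ℝ) (EuclideanSpace.single j (1:ℝ)) x
  simpa [EuclideanSpace.inner_single_left, EuclideanSpace.norm_single, Real.norm_eq_abs] using h

lemma aux_sum (n : ℕ) (A : Matrix (Fin n) (Fin n) ℝ) :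
    ‖A‖ ≤ ∑ j, ‖Matrix.toEuclideanLin A (EuclideanSpace.single j (1:ℝ))‖ := by
  rw [Matrix.l2_opNorm_def]
  apply ContinuousLinearMap.opNorm_le_bound _
    (Finset.sum_nonneg fun j _ => norm_nonneg _)
  intro x
  have hx : x = ∑ j, x j • EuclideanSpace.single j (1:ℝ) := by
    ext i
    rw [show (∑ j, x j • EuclideanSpace.single j (1:ℝ)) i
        = ∑ j, (x j • EuclideanSpace.single j (1:ℝ)) i by rw [WithLp.ofLp_sum, Finset.sum_apply]]
    simp [EuclideanSpace.single_apply]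
  calc ‖(Matrix.toEuclideanLin.trans LinearMap.toContinuousLinearMap A) x‖
      = ‖∑ j, x j • Matrix.toEuclideanLin A (EuclideanSpace.single j (1:ℝ))‖ := by
        conv_lhs => rw [hx]
        simp [map_sum]
    _ ≤ ∑ j, ‖x j • Matrix.toEuclideanLin A (EuclideanSpace.single j (1:ℝ))‖ :=
        norm_sum_le _ _
    _ ≤ ∑ j, ‖Matrix.toEuclideanLin A (EuclideanSpace.single j (1:ℝ))‖ * ‖x‖ := by
        apply Finset.sum_le_sum
        intro j _
        rw [norm_smul, mul_comm]
        exact mul_le_mul_of_nonneg_left (by simpa using aux_coord n x j) (norm_nonneg _)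
    _ = (∑ j, ‖Matrix.toEuclideanLin A (EuclideanSpace.single j (1:ℝ))‖) * ‖x‖ := by
        rw [Finset.sum_mul]

/-- Assuming `t ↦ ‖U(t,s₀)‖` is bounded on every compact interval `[s₀, N]`, the trivial
solution of the homogeneous GLDE is globally asymptotically stable (stable, and every solution
tends to `0`) if and only if `‖U(t,s₀)‖ → 0` as `t → +∞`, for every `s₀ ≥ 0`. -/
theorem stmt_2 (n : ℕ) (hn : 0 < n) (U : ℝ → ℝ → Matrix (Fin n) (Fin n) ℝ)
    (hloc : ∀ s₀ ≥ (0 : ℝ), ∀ N ≥ s₀, ∃ B : ℝ, ∀ t ∈ Set.Icc s₀ N, ‖U t s₀‖ ≤ B) :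
    ((∀ s₀ ≥ (0 : ℝ), ∀ ε > (0 : ℝ), ∃ δ > (0 : ℝ), ∀ x₀ : EuclideanSpace ℝ (Fin n),
        ‖x₀‖ < δ → ∀ t ≥ s₀, ‖Matrix.toEuclideanLin (U t s₀) x₀‖ < ε) ∧
      (∀ s₀ ≥ (0 : ℝ), ∀ x₀ : EuclideanSpace ℝ (Fin n),
        Filter.Tendsto (fun t => ‖Matrix.toEuclideanLin (U t s₀) x₀‖)
          Filter.atTop (nhds 0))) ↔
    (∀ s₀ ≥ (0 : ℝ), Filter.Tendsto (fun t => ‖U t s₀‖) Filter.atTop (nhds 0)) := by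
  constructor
  · rintro ⟨-, h2⟩ s₀ hs₀
    have hsum : Filter.Tendsto
        (fun t => ∑ j, ‖Matrix.toEuclideanLin (U t s₀) (EuclideanSpace.single j (1:ℝ))‖)
        Filter.atTop (nhds 0) := by
      have := tendsto_finset_sum (Finset.univ : Finset (Fin n))
        (fun j _ => h2 s₀ hs₀ (EuclideanSpace.single j (1:ℝ)))
      simpa using this
    exact squeeze_zero (fun t => norm_nonneg _) (fun t => aux_sum n (U t s₀)) hsum
  · intro h
    constructor
    · intro s₀ hs₀ ε hε
      have hev : ∀ᶠ t in Filter.atTop, ‖U t s₀‖ < 1 :=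
        (h s₀ hs₀).eventually (gt_mem_nhds one_pos)
      obtain ⟨N, hN⟩ := Filter.eventually_atTop.mp hev
      obtain ⟨B, hB⟩ := hloc s₀ hs₀ (max N s₀) (le_max_right _ _)
      set M : ℝ := max B 1 with hM
      have hM1 : (1:ℝ) ≤ M := le_max_right _ _
      have hMpos : 0 < M := lt_of_lt_of_le one_pos hM1
      refine ⟨ε / M, div_pos hε hMpos, fun x₀ hx₀ t ht => ?_⟩
      have hUb : ‖U t s₀‖ ≤ M := by
        rcases le_or_gt t (max N s₀) with h' | h'
        · exact le_trans (hB t ⟨ht, h'⟩) (le_max_left _ _)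
        · exact le_trans (hN t (le_of_lt (lt_of_le_of_lt (le_max_left N s₀) h'))).le hM1
      calc ‖Matrix.toEuclideanLin (U t s₀) x₀‖ ≤ ‖U t s₀‖ * ‖x₀‖ := aux_le n _ _
        _ ≤ M * ‖x₀‖ := mul_le_mul_of_nonneg_right hUb (norm_nonneg _)
        _ < M * (ε / M) := mul_lt_mul_of_pos_left hx₀ hMpos
        _ = ε := by field_simp
    · intro s₀ hs₀ x₀
      have hb : Filter.Tendsto (fun t => ‖U t s₀‖ * ‖x₀‖) Filter.atTop (nhds 0) := by
        simpa using (h s₀ hs₀).mul_const ‖x₀‖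
      exact squeeze_zero (fun t => norm_nonneg _) (fun t => aux_le n _ _) hb
end

section
/- Assume U satisfies the cocycle (transition) property. Then the trivial solution of the homogeneous generalized linear differential equation is uniformly asymptotically stable if and only if there exist positive constants K, α > 0 such that ‖U(t,s₀)‖ ≤ K e^{-α(t-s₀)} for all t ≥ s₀ ≥ 0. -/
open scoped Matrix.Norms.L2Operator

lemma aux_norm_apply_le {n : ℕ} (A : Matrix (Fin n) (Fin n) ℝ) (x : EuclideanSpace ℝ (Fin n)) :
    ‖Matrix.toEuclideanLin A x‖ ≤ ‖A‖ * ‖x‖ := by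
  simpa using ((Matrix.toEuclideanLin.trans LinearMap.toContinuousLinearMap) A).le_opNorm x

lemma aux_opNorm_le {n : ℕ} (A : Matrix (Fin n) (Fin n) ℝ) {C : ℝ} (hC : 0 ≤ C)
    (h : ∀ x : EuclideanSpace ℝ (Fin n), ‖Matrix.toEuclideanLin A x‖ ≤ C * ‖x‖) :
    ‖A‖ ≤ C := by
  rw [Matrix.l2_opNorm_def]
  exact ContinuousLinearMap.opNorm_le_bound _ hC (fun x => by simpa using h x)

lemma aux_ball {n : ℕ} (A : Matrix (Fin n) (Fin n) ℝ) {δ ε : ℝ} (hδ : 0 < δ) (hε : 0 ≤ ε)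
    (h : ∀ x : EuclideanSpace ℝ (Fin n), ‖x‖ < δ → ‖Matrix.toEuclideanLin A x‖ ≤ ε) :
    ‖A‖ ≤ 2 * ε / δ := by
  apply aux_opNorm_le A (by positivity)
  intro x
  by_cases hx : x = 0
  · simp [hx]
  · have hxn : 0 < ‖x‖ := norm_pos_iff.mpr hx
    set c : ℝ := δ / (2 * ‖x‖) with hc
    have hcpos : 0 < c := by positivity
    have hy : ‖c • x‖ < δ := by
      rw [norm_smul, Real.norm_eq_abs, abs_of_pos hcpos, hc]
      rw [div_mul_eq_mul_div, div_lt_iff₀ (by positivity)]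
      nlinarith
    have := h (c • x) hy
    rw [map_smul, norm_smul, Real.norm_eq_abs, abs_of_pos hcpos] at this
    have h2 : ‖Matrix.toEuclideanLin A x‖ ≤ ε / c := by
      rw [le_div_iff₀ hcpos]; linarith [this]
    calc ‖Matrix.toEuclideanLin A x‖ ≤ ε / c := h2
      _ = 2 * ε / δ * ‖x‖ := by
          rw [hc]; field_simp

/-- Assuming the cocycle property, the trivial solution of the homogeneous GLDE is uniformly
asymptotically stable if and only if there are `K, α > 0` with
`‖U(t,s₀)‖ ≤ K e^{-α (t - s₀)}` for all `t ≥ s₀ ≥ 0`. -/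
theorem stmt_3 (n : ℕ) (hn : 0 < n) (U : ℝ → ℝ → Matrix (Fin n) (Fin n) ℝ)
    (hid : ∀ t ≥ (0 : ℝ), U t t = 1)
    (hcoc : ∀ s r t : ℝ, 0 ≤ s → s ≤ r → r ≤ t → U t s = U t r * U r s) :
    ((∀ ε > (0 : ℝ), ∃ δ > (0 : ℝ), ∀ s₀ ≥ (0 : ℝ), ∀ x₀ : EuclideanSpace ℝ (Fin n),
        ‖x₀‖ < δ → ∀ t ≥ s₀, ‖Matrix.toEuclideanLin (U t s₀) x₀‖ < ε) ∧
      (∃ δ₀ > (0 : ℝ), ∀ ε > (0 : ℝ), ∃ T ≥ (0 : ℝ), ∀ s₀ ≥ (0 : ℝ),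
        ∀ x₀ : EuclideanSpace ℝ (Fin n), ‖x₀‖ < δ₀ →
          ∀ t ≥ s₀ + T, ‖Matrix.toEuclideanLin (U t s₀) x₀‖ < ε)) ↔
    (∃ K > (0 : ℝ), ∃ α > (0 : ℝ), ∀ s₀ ≥ (0 : ℝ), ∀ t ≥ s₀,
      ‖U t s₀‖ ≤ K * Real.exp (-α * (t - s₀))) := by
  constructor
  · rintro ⟨hus, δ₀, hδ₀, huas⟩
    obtain ⟨δ, hδ, h1⟩ := hus 1 one_pos
    have hK₀ : ∀ s₀ ≥ (0:ℝ), ∀ t ≥ s₀, ‖U t s₀‖ ≤ 2 / δ := by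
      intro s₀ hs₀ t ht
      have := aux_ball (U t s₀) hδ zero_le_one
        (fun x hx => (h1 s₀ hs₀ x hx t ht).le)
      simpa using this
    obtain ⟨T, hT0, hT⟩ := huas (δ₀ / 4) (by positivity)
    set T' : ℝ := max T 1 with hT'def
    have hT' : 0 < T' := lt_of_lt_of_le one_pos (le_max_right _ _)
    have hhalf : ∀ s₀ ≥ (0:ℝ), ∀ t ≥ s₀ + T', ‖U t s₀‖ ≤ 1 / 2 := by
      intro s₀ hs₀ t ht
      have hTT : s₀ + T ≤ s₀ + T' := by
        have := le_max_left T 1; linarith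
      have := aux_ball (U t s₀) hδ₀ (by positivity)
        (fun x hx => (hT s₀ hs₀ x hx t (le_trans hTT ht)).le)
      calc ‖U t s₀‖ ≤ 2 * (δ₀ / 4) / δ₀ := this
        _ = 1 / 2 := by field_simp; ring
    have hiter : ∀ m : ℕ, ∀ s₀ ≥ (0:ℝ), ∀ t ≥ s₀ + m * T',
        ‖U t s₀‖ ≤ (2 / δ) * (1 / 2) ^ m := by
      intro m
      induction m with
      | zero =>
        intro s₀ hs₀ t ht
        simpa using hK₀ s₀ hs₀ t (by push_cast at ht; linarith)
      | succ m ih =>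
        intro s₀ hs₀ t ht
        have hmT : (0:ℝ) ≤ m * T' := by positivity
        have h2 : s₀ + T' ≤ t := by push_cast at ht; nlinarith
        rw [hcoc s₀ (s₀ + T') t hs₀ (by linarith) h2]
        calc ‖U t (s₀ + T') * U (s₀ + T') s₀‖
            ≤ ‖U t (s₀ + T')‖ * ‖U (s₀ + T') s₀‖ := Matrix.l2_opNorm_mul _ _
          _ ≤ ((2 / δ) * (1 / 2) ^ m) * (1 / 2) := by
              apply mul_le_mul
              · exact ih (s₀ + T') (by linarith) t (by push_cast at ht ⊢; linarith)
              · exact hhalf s₀ hs₀ (s₀ + T') le_rfl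
              · exact norm_nonneg _
              · positivity
          _ = (2 / δ) * (1 / 2) ^ (m + 1) := by ring
    have hlog : 0 < Real.log 2 := Real.log_pos one_lt_two
    refine ⟨4 / δ, by positivity, Real.log 2 / T', by positivity, ?_⟩
    intro s₀ hs₀ t ht
    set m : ℕ := ⌊(t - s₀) / T'⌋₊ with hm
    have hts : 0 ≤ t - s₀ := by linarith
    have h1' : (m : ℝ) ≤ (t - s₀) / T' := Nat.floor_le (by positivity)
    have h2 : (t - s₀) / T' < m + 1 := Nat.lt_floor_add_one _
    have hmle : s₀ + m * T' ≤ t := by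
      have := (le_div_iff₀ hT').mp h1'
      linarith
    have hmain := hiter m s₀ hs₀ t hmle
    have key : (1 / 2 : ℝ) ^ m ≤ 2 * Real.exp (-(Real.log 2 / T') * (t - s₀)) := by
      have hexp : (1 / 2 : ℝ) ^ m = Real.exp (-(m * Real.log 2)) := by
        rw [Real.exp_neg, Real.exp_nat_mul, Real.exp_log two_pos]
        simp [inv_pow]
      rw [hexp]
      have hq : Real.log 2 / T' * (t - s₀) = Real.log 2 * ((t - s₀) / T') := by
        field_simp
      have hle : -(m * Real.log 2) ≤ Real.log 2 + -(Real.log 2 / T') * (t - s₀) := by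
        have := mul_le_mul_of_nonneg_left h2.le hlog.le
        nlinarith [hq, this]
      calc Real.exp (-(m * Real.log 2))
          ≤ Real.exp (Real.log 2 + -(Real.log 2 / T') * (t - s₀)) := Real.exp_le_exp.mpr hle
        _ = 2 * Real.exp (-(Real.log 2 / T') * (t - s₀)) := by
            rw [Real.exp_add, Real.exp_log two_pos]
    calc ‖U t s₀‖ ≤ (2 / δ) * (1 / 2) ^ m := hmain
      _ ≤ (2 / δ) * (2 * Real.exp (-(Real.log 2 / T') * (t - s₀))) := by
          apply mul_le_mul_of_nonneg_left key (by positivity)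
      _ = 4 / δ * Real.exp (-(Real.log 2 / T') * (t - s₀)) := by ring
  · rintro ⟨K, hK, α, hα, hbd⟩
    constructor
    · intro ε hε
      refine ⟨ε / K, by positivity, ?_⟩
      intro s₀ hs₀ x₀ hx₀ t ht
      have h1 : ‖Matrix.toEuclideanLin (U t s₀) x₀‖ ≤ ‖U t s₀‖ * ‖x₀‖ :=
        aux_norm_apply_le _ _
      have h2 : ‖U t s₀‖ ≤ K * Real.exp (-α * (t - s₀)) := hbd s₀ hs₀ t ht
      have h3 : Real.exp (-α * (t - s₀)) ≤ 1 := by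
        apply Real.exp_le_one_iff.mpr
        nlinarith
      have h4 : ‖U t s₀‖ ≤ K := le_trans h2 (by nlinarith [Real.exp_pos (-α * (t - s₀))])
      calc ‖Matrix.toEuclideanLin (U t s₀) x₀‖ ≤ ‖U t s₀‖ * ‖x₀‖ := h1
        _ ≤ K * ‖x₀‖ := mul_le_mul_of_nonneg_right h4 (norm_nonneg _)
        _ < K * (ε / K) := by
            apply mul_lt_mul_of_pos_left hx₀ hK
        _ = ε := by field_simp
    · refine ⟨1, one_pos, ?_⟩
      intro ε hε
      refine ⟨max 0 (Real.log (K / ε) / α), le_max_left _ _, ?_⟩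
      intro s₀ hs₀ x₀ hx₀ t ht
      set T := max 0 (Real.log (K / ε) / α) with hTdef
      have hTnn : (0:ℝ) ≤ T := le_max_left _ _
      have hαT : Real.log (K / ε) ≤ α * T := by
        have h1 : Real.log (K / ε) / α ≤ T := le_max_right _ _
        calc Real.log (K / ε) = α * (Real.log (K / ε) / α) := by field_simp
          _ ≤ α * T := mul_le_mul_of_nonneg_left h1 hα.le
      have hKe : K * Real.exp (-α * (t - s₀)) ≤ ε := by
        have h1 : T ≤ t - s₀ := by linarith
        have h2 : Real.log (K / ε) ≤ α * (t - s₀) := le_trans hαT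
          (mul_le_mul_of_nonneg_left h1 hα.le)
        have h3 : K / ε ≤ Real.exp (α * (t - s₀)) := by
          calc K / ε = Real.exp (Real.log (K / ε)) := by
                rw [Real.exp_log (by positivity)]
            _ ≤ Real.exp (α * (t - s₀)) := Real.exp_le_exp.mpr h2
        have h4 : K ≤ ε * Real.exp (α * (t - s₀)) := by
          rw [div_le_iff₀ hε] at h3; linarith
        rw [neg_mul, Real.exp_neg, mul_comm, ← div_eq_inv_mul,
          div_le_iff₀ (Real.exp_pos _)]
        linarith
      have hpos : 0 < K * Real.exp (-α * (t - s₀)) := by positivity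
      calc ‖Matrix.toEuclideanLin (U t s₀) x₀‖
          ≤ ‖U t s₀‖ * ‖x₀‖ := aux_norm_apply_le _ _
        _ ≤ (K * Real.exp (-α * (t - s₀))) * ‖x₀‖ := by
            apply mul_le_mul_of_nonneg_right (hbd s₀ hs₀ t (by linarith)) (norm_nonneg _)
        _ < (K * Real.exp (-α * (t - s₀))) * 1 := mul_lt_mul_of_pos_left hx₀ hpos
        _ ≤ ε := by rw [mul_one]; exact hKe
end

section
/- Assume U satisfies the cocycle (transition) property. Then the trivial solution of the homogeneous generalized linear differential equation is uniformly asymptotically stable if and only if it is globally uniformly exponentially stable. -/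
open scoped Matrix.Norms.L2Operator

private lemma aux_mul_apply (n : ℕ) (A B : Matrix (Fin n) (Fin n) ℝ)
    (x : EuclideanSpace ℝ (Fin n)) :
    Matrix.toEuclideanLin (A * B) x = Matrix.toEuclideanLin A (Matrix.toEuclideanLin B x) := by
  simp [Matrix.toEuclideanLin_apply, Matrix.mulVec_mulVec]

private lemma aux_one_apply (n : ℕ) (x : EuclideanSpace ℝ (Fin n)) :
    Matrix.toEuclideanLin (1 : Matrix (Fin n) (Fin n) ℝ) x = x := by
  simp [Matrix.toEuclideanLin_apply]

private lemma aux_scale {E F : Type*} [NormedAddCommGroup E] [NormedSpace ℝ E]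
    [NormedAddCommGroup F] [NormedSpace ℝ F] (f : E →ₗ[ℝ] F) {δ ε : ℝ} (hδ : 0 < δ)
    (h : ∀ y : E, ‖y‖ < δ → ‖f y‖ < ε) (x : E) : ‖f x‖ ≤ 2 * ε / δ * ‖x‖ := by
  rcases eq_or_ne x 0 with rfl | hx
  · simp
  · have hxn : 0 < ‖x‖ := norm_pos_iff.mpr hx
    set c : ℝ := δ / (2 * ‖x‖) with hc
    have hcpos : 0 < c := by positivity
    have hcx : ‖c • x‖ < δ := by
      rw [norm_smul, Real.norm_of_nonneg hcpos.le, hc]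
      rw [div_mul_eq_mul_div, mul_comm 2 ‖x‖, ← div_div, mul_div_assoc,
        div_self hxn.ne', mul_one]
      linarith
    have := h (c • x) hcx
    rw [map_smul, norm_smul, Real.norm_of_nonneg hcpos.le] at this
    have h2 : ‖f x‖ < ε / c := (lt_div_iff₀' hcpos).mpr this
    have heq : ε / c = 2 * ε / δ * ‖x‖ := by
      field_simp [hc]
      rw [hc]; field_simp
    linarith [heq ▸ h2]

/-- Assuming the cocycle property, the trivial solution of the homogeneous GLDE is uniformly
asymptotically stable if and only if it is globally uniformly exponentially stable. -/
theorem stmt_5 (n : ℕ) (hn : 0 < n) (U : ℝ → ℝ → Matrix (Fin n) (Fin n) ℝ)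
    (hid : ∀ t ≥ (0 : ℝ), U t t = 1)
    (hcoc : ∀ s r t : ℝ, 0 ≤ s → s ≤ r → r ≤ t → U t s = U t r * U r s) :
    ((∀ ε > (0 : ℝ), ∃ δ > (0 : ℝ), ∀ s₀ ≥ (0 : ℝ), ∀ x₀ : EuclideanSpace ℝ (Fin n),
        ‖x₀‖ < δ → ∀ t ≥ s₀, ‖Matrix.toEuclideanLin (U t s₀) x₀‖ < ε) ∧
      (∃ δ₀ > (0 : ℝ), ∀ ε > (0 : ℝ), ∃ T ≥ (0 : ℝ), ∀ s₀ ≥ (0 : ℝ),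
        ∀ x₀ : EuclideanSpace ℝ (Fin n), ‖x₀‖ < δ₀ →
          ∀ t ≥ s₀ + T, ‖Matrix.toEuclideanLin (U t s₀) x₀‖ < ε)) ↔
    (∃ K > (0 : ℝ), ∃ α > (0 : ℝ), ∀ x₀ : EuclideanSpace ℝ (Fin n), ∀ s₀ ≥ (0 : ℝ),
      ∀ t ≥ s₀, ‖Matrix.toEuclideanLin (U t s₀) x₀‖ ≤
        K * ‖x₀‖ * Real.exp (-α * (t - s₀))) := by
  constructor
  · rintro ⟨hstab, δ₀, hδ₀, hatt⟩
    -- uniform bound M on all transition operators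
    obtain ⟨δ, hδ, h1⟩ := hstab 1 one_pos
    set M : ℝ := 2 * 1 / δ with hM
    have hMpos : 0 < M := by positivity
    have hMb : ∀ s₀ ≥ (0:ℝ), ∀ t ≥ s₀, ∀ x : EuclideanSpace ℝ (Fin n),
        ‖Matrix.toEuclideanLin (U t s₀) x‖ ≤ M * ‖x‖ := by
      intro s₀ hs₀ t ht x
      exact aux_scale (Matrix.toEuclideanLin (U t s₀)) hδ
        (fun y hy => h1 s₀ hs₀ y hy t ht) x
    -- contraction after time T₁
    have hεpos : 0 < δ₀ / (2 * Real.exp 1) := by positivity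
    obtain ⟨T, hT, h2⟩ := hatt (δ₀ / (2 * Real.exp 1)) hεpos
    set T₁ : ℝ := T + 1 with hT₁
    have hT₁pos : 0 < T₁ := by linarith
    have hcon : ∀ s₀ ≥ (0:ℝ), ∀ x : EuclideanSpace ℝ (Fin n),
        ‖Matrix.toEuclideanLin (U (s₀ + T₁) s₀) x‖ ≤ (Real.exp 1)⁻¹ * ‖x‖ := by
      intro s₀ hs₀ x
      have hb := aux_scale (Matrix.toEuclideanLin (U (s₀ + T₁) s₀)) hδ₀
        (fun y hy => h2 s₀ hs₀ y hy (s₀ + T₁) (by linarith)) x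
      have heq : 2 * (δ₀ / (2 * Real.exp 1)) / δ₀ = (Real.exp 1)⁻¹ := by
        field_simp
      rwa [heq] at hb
    -- iterate the contraction
    have key : ∀ m : ℕ, ∀ s₀ ≥ (0:ℝ), ∀ x : EuclideanSpace ℝ (Fin n),
        ‖Matrix.toEuclideanLin (U (s₀ + m * T₁) s₀) x‖ ≤ (Real.exp 1)⁻¹ ^ m * ‖x‖ := by
      intro m
      induction m with
      | zero =>
        intro s₀ hs₀ x
        simp only [Nat.cast_zero, zero_mul, add_zero, pow_zero, one_mul]
        rw [hid s₀ hs₀, aux_one_apply]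
      | succ m ih =>
        intro s₀ hs₀ x
        have hstep : s₀ + ((m : ℝ) + 1) * T₁ = (s₀ + T₁) + m * T₁ := by ring
        have hsplit : U (s₀ + ((m : ℕ) + 1 : ℕ) * T₁) s₀
            = U ((s₀ + T₁) + m * T₁) (s₀ + T₁) * U (s₀ + T₁) s₀ := by
          push_cast
          rw [hstep]
          exact hcoc s₀ (s₀ + T₁) ((s₀ + T₁) + m * T₁) hs₀ (by linarith)
            (by nlinarith [Nat.cast_nonneg (α := ℝ) m])
        rw [hsplit, aux_mul_apply]
        calc ‖Matrix.toEuclideanLin (U ((s₀ + T₁) + m * T₁) (s₀ + T₁))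
                (Matrix.toEuclideanLin (U (s₀ + T₁) s₀) x)‖
            ≤ (Real.exp 1)⁻¹ ^ m * ‖Matrix.toEuclideanLin (U (s₀ + T₁) s₀) x‖ :=
              ih (s₀ + T₁) (by linarith) _
          _ ≤ (Real.exp 1)⁻¹ ^ m * ((Real.exp 1)⁻¹ * ‖x‖) := by
              apply mul_le_mul_of_nonneg_left (hcon s₀ hs₀ x) (by positivity)
          _ = (Real.exp 1)⁻¹ ^ (m + 1) * ‖x‖ := by ring
    -- conclude
    refine ⟨M * Real.exp 1, by positivity, 1 / T₁, by positivity, ?_⟩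
    intro x₀ s₀ hs₀ t ht
    set m : ℕ := ⌊(t - s₀) / T₁⌋₊ with hm
    have hdiv : 0 ≤ (t - s₀) / T₁ := by
      apply div_nonneg (by linarith) hT₁pos.le
    have hmle : (m : ℝ) ≤ (t - s₀) / T₁ := Nat.floor_le hdiv
    have hmgt : (t - s₀) / T₁ < (m : ℝ) + 1 := Nat.lt_floor_add_one _
    have hmid : s₀ + m * T₁ ≤ t := by
      nlinarith [(le_div_iff₀ hT₁pos).mp hmle]
    have hmid0 : s₀ ≤ s₀ + m * T₁ := by nlinarith [Nat.cast_nonneg (α := ℝ) m]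
    have hsplit : U t s₀ = U t (s₀ + m * T₁) * U (s₀ + m * T₁) s₀ :=
      hcoc s₀ (s₀ + m * T₁) t hs₀ hmid0 hmid
    have hexp : (Real.exp 1)⁻¹ ^ m = Real.exp (-(m : ℝ)) := by
      rw [← Real.exp_neg, ← Real.exp_nat_mul]
      norm_num
    have hexple : Real.exp (-(m : ℝ)) ≤ Real.exp 1 * Real.exp (-(1 / T₁) * (t - s₀)) := by
      rw [← Real.exp_add]
      apply Real.exp_le_exp.mpr
      have heq : -(1 / T₁) * (t - s₀) = -((t - s₀) / T₁) := by ring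
      rw [heq]
      linarith
    calc ‖Matrix.toEuclideanLin (U t s₀) x₀‖
        = ‖Matrix.toEuclideanLin (U t (s₀ + m * T₁))
            (Matrix.toEuclideanLin (U (s₀ + m * T₁) s₀) x₀)‖ := by
          rw [hsplit, aux_mul_apply]
      _ ≤ M * ‖Matrix.toEuclideanLin (U (s₀ + m * T₁) s₀) x₀‖ :=
          hMb (s₀ + m * T₁) (by linarith) t hmid _
      _ ≤ M * ((Real.exp 1)⁻¹ ^ m * ‖x₀‖) :=
          mul_le_mul_of_nonneg_left (key m s₀ hs₀ x₀) hMpos.le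
      _ = M * ‖x₀‖ * Real.exp (-(m : ℝ)) := by rw [hexp]; ring
      _ ≤ M * ‖x₀‖ * (Real.exp 1 * Real.exp (-(1 / T₁) * (t - s₀))) :=
          mul_le_mul_of_nonneg_left hexple (by positivity)
      _ = M * Real.exp 1 * ‖x₀‖ * Real.exp (-(1 / T₁) * (t - s₀)) := by ring
  · rintro ⟨K, hK, α, hα, hb⟩
    constructor
    · intro ε hε
      refine ⟨ε / K, by positivity, ?_⟩
      intro s₀ hs₀ x₀ hx₀ t ht
      have h := hb x₀ s₀ hs₀ t ht
      have he : Real.exp (-α * (t - s₀)) ≤ 1 := by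
        apply Real.exp_le_one_iff.mpr
        nlinarith
      have hx0 : 0 ≤ ‖x₀‖ := norm_nonneg _
      calc ‖Matrix.toEuclideanLin (U t s₀) x₀‖ ≤ K * ‖x₀‖ * Real.exp (-α * (t - s₀)) := h
        _ ≤ K * ‖x₀‖ * 1 := mul_le_mul_of_nonneg_left he (by positivity)
        _ < ε := by
            rw [mul_one]
            calc K * ‖x₀‖ < K * (ε / K) := mul_lt_mul_of_pos_left hx₀ hK
              _ = ε := by field_simp
    · refine ⟨1, one_pos, ?_⟩
      intro ε hε
      set T : ℝ := max 1 (Real.log (K / ε) / α + 1) with hTdef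
      have hT1 : (1:ℝ) ≤ T := le_max_left _ _
      have hαT : Real.log (K / ε) < α * T := by
        rcases le_or_gt (Real.log (K / ε) / α + 1) 1 with h | h
        · have hle : Real.log (K / ε) / α ≤ 0 := by linarith
          have hlog : Real.log (K / ε) ≤ 0 := by
            by_contra hc
            push_neg at hc
            have : 0 < Real.log (K / ε) / α := by positivity
            linarith
          nlinarith
        · have hTge : Real.log (K / ε) / α + 1 ≤ T := le_max_right _ _
          nlinarith [(div_le_iff₀ hα).mp (by linarith : Real.log (K / ε) / α ≤ T - 1)]
      have hexp : Real.exp (-(α * T)) < ε / K := by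
        have heq : ε / K = Real.exp (Real.log (ε / K)) := (Real.exp_log (by positivity)).symm
        rw [heq]
        apply Real.exp_lt_exp.mpr
        have hlogeq : Real.log (ε / K) = - Real.log (K / ε) := by
          rw [← Real.log_inv]
          congr 1
          field_simp
        rw [hlogeq]
        linarith
      refine ⟨T, by linarith, ?_⟩
      intro s₀ hs₀ x₀ hx₀ t ht
      have h := hb x₀ s₀ hs₀ t (by linarith)
      have hmon : Real.exp (-α * (t - s₀)) ≤ Real.exp (-(α * T)) := by
        apply Real.exp_le_exp.mpr
        nlinarith
      have hx0 : 0 ≤ ‖x₀‖ := norm_nonneg _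
      calc ‖Matrix.toEuclideanLin (U t s₀) x₀‖ ≤ K * ‖x₀‖ * Real.exp (-α * (t - s₀)) := h
        _ ≤ K * 1 * Real.exp (-(α * T)) := by
            apply mul_le_mul
            · nlinarith
            · exact hmon
            · positivity
            · positivity
        _ < K * 1 * (ε / K) := mul_lt_mul_of_pos_left hexp (by positivity)
        _ = ε := by field_simp
end

section
/- Let ω > 0. Assume U satisfies the cocycle (transition) property, is ω-periodic in the sense that U(t+ω, s+ω) = U(t,s) for all t ≥ s ≥ 0, and that there exists M > 0 with ‖U(t,s)‖ ≤ M for all 0 ≤ s ≤ t ≤ ω. If every complex eigenvalue μ of the monodromy matrix U(ω,0) (regarded as a matrix over ℂ) satisfies |μ| < 1, then there exist constants K, α > 0 such that ‖U(t,s)‖ ≤ K e^{-α(t-s)} for all t ≥ s ≥ 0; in particular the trivial solution of the homogeneous generalized linear differential equation is globally uniformly exponentially stable. -/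
open scoped Matrix.Norms.L2Operator

private lemma stmt6_cmp (n : ℕ) (B : Matrix (Fin n) (Fin n) ℝ) :
    ‖B‖ ≤ ‖B.map ((↑) : ℝ → ℂ)‖ := by
  rw [Matrix.l2_opNorm_def]
  refine ContinuousLinearMap.opNorm_le_bound _ (norm_nonneg _) fun x => ?_
  set xc : EuclideanSpace ℂ (Fin n) := (WithLp.equiv 2 _).symm (fun i => ((x i : ℝ) : ℂ)) with hxc
  have hnx : ‖xc‖ = ‖x‖ := by
    rw [EuclideanSpace.norm_eq, EuclideanSpace.norm_eq]
    congr 1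
    refine Finset.sum_congr rfl fun i _ => ?_
    simp [xc]
  have hentry : ∀ i, (Matrix.toEuclideanLin (B.map ((↑) : ℝ → ℂ)) xc) i
      = (((Matrix.toEuclideanLin B x) i : ℝ) : ℂ) := by
    intro i
    simp [Matrix.toEuclideanLin_apply, Matrix.mulVec, dotProduct, xc]
  have key : ‖Matrix.toEuclideanLin B x‖ = ‖Matrix.toEuclideanLin (B.map ((↑) : ℝ → ℂ)) xc‖ := by
    rw [EuclideanSpace.norm_eq, EuclideanSpace.norm_eq]
    congr 1
    refine Finset.sum_congr rfl fun i _ => ?_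
    rw [hentry i]
    simp
  have h2 : ‖Matrix.toEuclideanLin (B.map ((↑) : ℝ → ℂ)) xc‖ ≤ ‖B.map ((↑) : ℝ → ℂ)‖ * ‖xc‖ := by
    rw [Matrix.l2_opNorm_def]
    exact ContinuousLinearMap.le_opNorm
      ((Matrix.toEuclideanLin ≪≫ₗ LinearMap.toContinuousLinearMap) (B.map ((↑) : ℝ → ℂ))) xc
  show ‖Matrix.toEuclideanLin B x‖ ≤ _
  rw [key, ← hnx]
  exact h2

private lemma stmt6_pow_decay (n : ℕ) (hn : 0 < n) (C : Matrix (Fin n) (Fin n) ℝ)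
    (heig : ∀ μ ∈ spectrum ℂ (C.map ((↑) : ℝ → ℂ)), ‖μ‖ < 1) :
    ∃ c > (0 : ℝ), ∃ ρ : ℝ, 0 < ρ ∧ ρ < 1 ∧ ∀ p : ℕ, ‖C ^ p‖ ≤ c * ρ ^ p := by
  haveI : Nonempty (Fin n) := ⟨⟨0, hn⟩⟩
  set A : Matrix (Fin n) (Fin n) ℂ := C.map ((↑) : ℝ → ℂ) with hA
  -- spectral radius < 1
  have hsr : spectralRadius ℂ A < 1 := by
    have := spectrum.spectralRadius_lt_of_forall_lt A (r := 1) ?_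
    · simpa using this
    · intro z hz
      simpa [← NNReal.coe_lt_coe] using heig z hz
  -- Gelfand: some power has norm < 1
  obtain ⟨m, hm1, hAm⟩ : ∃ m : ℕ, 1 ≤ m ∧ ‖A ^ m‖ < 1 := by
    have hG := spectrum.pow_nnnorm_pow_one_div_tendsto_nhds_spectralRadius A
    have hev : ∀ᶠ m : ℕ in Filter.atTop, (‖A ^ m‖₊ : ENNReal) ^ (1 / m : ℝ) < 1 :=
      hG.eventually_lt_const hsr
    obtain ⟨m, hm, hm1⟩ := (hev.and (Filter.eventually_ge_atTop 1)).exists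
    refine ⟨m, hm1, ?_⟩
    by_contra hge
    push_neg at hge
    have hnn : (1 : NNReal) ≤ ‖A ^ m‖₊ := by
      rw [← norm_toNNReal]
      exact Real.one_le_toNNReal.mpr hge
    have h1 : (1 : ENNReal) ≤ (‖A ^ m‖₊ : ENNReal) ^ (1 / m : ℝ) :=
      ENNReal.one_le_rpow (by exact_mod_cast hnn) (by positivity)
    exact absurd hm (not_lt.mpr h1)
  -- transfer to the real matrix
  have hmap : (C ^ m).map ((↑) : ℝ → ℂ) = A ^ m := by
    have := map_pow
      (Complex.ofRealHom.mapMatrix : Matrix (Fin n) (Fin n) ℝ →+* Matrix (Fin n) (Fin n) ℂ) C m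
    simp only [RingHom.mapMatrix_apply, hA] at this; exact this
  have hCm : ‖C ^ m‖ < 1 := lt_of_le_of_lt (by rw [← hmap] at hAm ⊢; exact stmt6_cmp n _) hAm
  -- set up constants
  set r : ℝ := max ‖C ^ m‖ (1 / 2) with hr
  have hr0 : 0 < r := lt_of_lt_of_le (by norm_num) (le_max_right _ _)
  have hr1 : r < 1 := max_lt hCm (by norm_num)
  have hCmr : ‖C ^ m‖ ≤ r := le_max_left _ _
  set b : ℝ := max ‖C‖ 1 with hb
  have hb1 : (1 : ℝ) ≤ b := le_max_right _ _
  have hb0 : (0 : ℝ) < b := lt_of_lt_of_le one_pos hb1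
  refine ⟨b ^ m / r, by positivity, r ^ ((1 : ℝ) / m), Real.rpow_pos_of_pos hr0 _,
    Real.rpow_lt_one (le_of_lt hr0) hr1 (by positivity), fun p => ?_⟩
  -- decompose p = m * (p / m) + p % m
  have hp : C ^ p = (C ^ m) ^ (p / m) * C ^ (p % m) := by
    rw [← pow_mul, ← pow_add, Nat.div_add_mod]
  have h1 : ‖C ^ p‖ ≤ ‖C ^ m‖ ^ (p / m) * ‖C‖ ^ (p % m) := by
    rw [hp]
    calc ‖(C ^ m) ^ (p / m) * C ^ (p % m)‖
        ≤ ‖(C ^ m) ^ (p / m)‖ * ‖C ^ (p % m)‖ := norm_mul_le _ _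
      _ ≤ ‖C ^ m‖ ^ (p / m) * ‖C‖ ^ (p % m) := by
          gcongr <;> [exact norm_pow_le _ _; exact norm_pow_le _ _]
  have h2 : ‖C ^ m‖ ^ (p / m) * ‖C‖ ^ (p % m) ≤ r ^ (p / m) * b ^ m := by
    have hCb : ‖C‖ ^ (p % m) ≤ b ^ m := by
      calc ‖C‖ ^ (p % m) ≤ b ^ (p % m) := by gcongr; exact le_max_left _ _
        _ ≤ b ^ m := pow_le_pow_right₀ hb1 (le_of_lt (Nat.mod_lt _ (by omega)))
    exact mul_le_mul (pow_le_pow_left₀ (norm_nonneg _) hCmr _) hCb (by positivity) (by positivity)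
  have hkey : r ^ (p / m) * r ≤ (r ^ ((1 : ℝ) / m)) ^ p := by
    have hrw : (r ^ ((1 : ℝ) / m)) ^ p = r ^ ((p : ℝ) / m) := by
      rw [← Real.rpow_natCast (r ^ ((1 : ℝ) / m)) p, ← Real.rpow_mul (le_of_lt hr0)]
      congr 1
      ring
    have hrw2 : r ^ (p / m) * r = r ^ (((p / m : ℕ) : ℝ) + 1) := by
      rw [Real.rpow_add hr0, Real.rpow_one, Real.rpow_natCast]
    rw [hrw, hrw2]
    apply Real.rpow_le_rpow_of_exponent_ge hr0 (le_of_lt hr1)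
    have hm0 : (0 : ℝ) < m := by exact_mod_cast (by omega : 0 < m)
    rw [div_le_iff₀ hm0]
    have hsplit : p = m * (p / m) + p % m := (Nat.div_add_mod p m).symm
    have hmod : ((p % m : ℕ) : ℝ) < ((m : ℕ) : ℝ) := by exact_mod_cast Nat.mod_lt p (by omega : 0 < m)
    have : (p : ℝ) = (m : ℝ) * ((p / m : ℕ) : ℝ) + ((p % m : ℕ) : ℝ) := by exact_mod_cast hsplit
    rw [this]
    ring_nf
    nlinarith [hmod]
  have h3 : r ^ (p / m) * b ^ m ≤ b ^ m / r * (r ^ ((1 : ℝ) / m)) ^ p := by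
    rw [div_mul_eq_mul_div, le_div_iff₀ hr0]
    calc r ^ (p / m) * b ^ m * r = (r ^ (p / m) * r) * b ^ m := by ring
      _ ≤ (r ^ ((1 : ℝ) / m)) ^ p * b ^ m := mul_le_mul_of_nonneg_right hkey (by positivity)
      _ = b ^ m * (r ^ ((1 : ℝ) / m)) ^ p := mul_comm _ _
  calc ‖C ^ p‖ ≤ ‖C ^ m‖ ^ (p / m) * ‖C‖ ^ (p % m) := h1
    _ ≤ r ^ (p / m) * b ^ m := h2
    _ ≤ b ^ m / r * (r ^ ((1 : ℝ) / m)) ^ p := h3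

set_option maxHeartbeats 1000000 in
/-- Floquet theory, sufficiency: if `U` is an `ω`-periodic cocycle, bounded on the window
`0 ≤ s ≤ t ≤ ω`, and every complex eigenvalue of the monodromy matrix `U(ω,0)` lies strictly
inside the unit circle, then `U` admits a uniform exponential bound; in particular the trivial
solution is globally uniformly exponentially stable. -/
theorem stmt_6 (n : ℕ) (hn : 0 < n) (U : ℝ → ℝ → Matrix (Fin n) (Fin n) ℝ)
    (ω : ℝ) (hω : 0 < ω)
    (hid : ∀ t ≥ (0 : ℝ), U t t = 1)
    (hcoc : ∀ s r t : ℝ, 0 ≤ s → s ≤ r → r ≤ t → U t s = U t r * U r s)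
    (hper : ∀ s t : ℝ, 0 ≤ s → s ≤ t → U (t + ω) (s + ω) = U t s)
    (M : ℝ) (hM : 0 < M)
    (hbdd : ∀ s t : ℝ, 0 ≤ s → s ≤ t → t ≤ ω → ‖U t s‖ ≤ M)
    (heig : ∀ μ ∈ spectrum ℂ ((U ω 0).map ((↑) : ℝ → ℂ)), ‖μ‖ < 1) :
    ∃ K > (0 : ℝ), ∃ α > (0 : ℝ),
      (∀ s t : ℝ, 0 ≤ s → s ≤ t → ‖U t s‖ ≤ K * Real.exp (-α * (t - s))) ∧
      (∀ x₀ : EuclideanSpace ℝ (Fin n), ∀ s₀ ≥ (0 : ℝ), ∀ t ≥ s₀,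
        ‖Matrix.toEuclideanLin (U t s₀) x₀‖ ≤ K * ‖x₀‖ * Real.exp (-α * (t - s₀))) := by
  haveI : Nonempty (Fin n) := ⟨⟨0, hn⟩⟩
  have hM1 : (1 : ℝ) ≤ M := by
    have h := hbdd 0 0 le_rfl le_rfl (le_of_lt hω)
    rwa [hid 0 le_rfl, norm_one] at h
  -- iterated periodicity
  have hshift : ∀ (j : ℕ) (s t : ℝ), 0 ≤ s → s ≤ t → U (t + j * ω) (s + j * ω) = U t s := by
    intro j
    induction j with
    | zero => intro s t _ _; simp
    | succ j ih =>
      intro s t hs hst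
      have h1 : U (t + j * ω + ω) (s + j * ω + ω) = U (t + j * ω) (s + j * ω) :=
        hper (s + j * ω) (t + j * ω) (by positivity) (by linarith)
      have e1 : t + ((j : ℕ) + 1 : ℕ) * ω = t + j * ω + ω := by push_cast; ring
      have e2 : s + ((j : ℕ) + 1 : ℕ) * ω = s + j * ω + ω := by push_cast; ring
      rw [e1, e2, h1, ih s t hs hst]
  -- bound on windows of length ≤ ω
  have hwin1 : ∀ s t : ℝ, 0 ≤ s → s ≤ t → t - s ≤ ω → ‖U t s‖ ≤ M ^ 2 := by
    intro s t hs hst hgap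
    set j : ℕ := ⌊s / ω⌋₊ with hj
    have hjs : (j : ℝ) * ω ≤ s := by
      have h := Nat.floor_le (div_nonneg hs (le_of_lt hω))
      calc (j : ℝ) * ω ≤ s / ω * ω := mul_le_mul_of_nonneg_right h (le_of_lt hω)
        _ = s := div_mul_cancel₀ s (ne_of_gt hω)
    have hsj : s < ((j : ℝ) + 1) * ω := by
      have h := Nat.lt_floor_add_one (s / ω)
      calc s = s / ω * ω := (div_mul_cancel₀ s (ne_of_gt hω)).symm
        _ < ((j : ℝ) + 1) * ω := mul_lt_mul_of_pos_right h hω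
    set s' := s - j * ω with hs'
    set t' := t - j * ω with ht'
    have hs'0 : 0 ≤ s' := by simp only [hs']; linarith
    have hs'ω : s' < ω := by simp only [hs']; nlinarith
    have hst' : s' ≤ t' := by simp only [hs', ht']; linarith
    have hUeq : U t s = U t' s' := by
      have h := hshift j s' t' hs'0 hst'
      rw [← h]; congr 1 <;> (simp only [hs', ht']; ring)
    rw [hUeq]
    by_cases hc : t' ≤ ω
    · have h := hbdd s' t' hs'0 hst' hc
      nlinarith
    · push_neg at hc
      have hsplit : U t' s' = U t' ω * U ω s' := hcoc s' ω t' hs'0 (le_of_lt hs'ω) (le_of_lt hc)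
      have h1 : ‖U ω s'‖ ≤ M := hbdd s' ω hs'0 (le_of_lt hs'ω) le_rfl
      have h2 : ‖U t' ω‖ ≤ M := by
        have he : U t' ω = U (t' - ω) 0 := by
          have h := hper 0 (t' - ω) le_rfl (by linarith)
          rw [← h]; congr 1 <;> ring
        rw [he]
        refine hbdd 0 (t' - ω) le_rfl (by linarith) ?_
        have : t' - s' ≤ ω := by simp only [hs', ht']; linarith
        linarith
      calc ‖U t' s'‖ = ‖U t' ω * U ω s'‖ := by rw [hsplit]
        _ ≤ ‖U t' ω‖ * ‖U ω s'‖ := norm_mul_le _ _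
        _ ≤ M * M := mul_le_mul h2 h1 (norm_nonneg _) (by linarith)
        _ = M ^ 2 := (sq M).symm
  -- bound on windows of length ≤ 2ω
  have hwin2 : ∀ s t : ℝ, 0 ≤ s → s ≤ t → t - s ≤ 2 * ω → ‖U t s‖ ≤ M ^ 4 := by
    intro s t hs hst hgap
    set rm := s + (t - s) / 2 with hrm
    have h1 : ‖U rm s‖ ≤ M ^ 2 := hwin1 s rm hs (by simp only [hrm]; linarith)
      (by simp only [hrm]; linarith)
    have h2 : ‖U t rm‖ ≤ M ^ 2 := hwin1 rm t (by simp only [hrm]; linarith)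
      (by simp only [hrm]; linarith) (by simp only [hrm]; linarith)
    have hde := hcoc s rm t hs (by simp only [hrm]; linarith) (by simp only [hrm]; linarith)
    calc ‖U t s‖ = ‖U t rm * U rm s‖ := by rw [hde]
      _ ≤ ‖U t rm‖ * ‖U rm s‖ := norm_mul_le _ _
      _ ≤ M ^ 2 * M ^ 2 := mul_le_mul h2 h1 (norm_nonneg _) (by positivity)
      _ = M ^ 4 := by ring
  -- powers of the monodromy matrix
  set C := U ω 0 with hC
  have hCpow : ∀ k : ℕ, U ((k : ℝ) * ω) 0 = C ^ k := by
    intro k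
    induction k with
    | zero => simpa using hid 0 le_rfl
    | succ k ih =>
      have h1 : U (((k : ℕ) + 1 : ℕ) * ω) 0
          = U (((k : ℝ) + 1) * ω) ((k : ℝ) * ω) * U ((k : ℝ) * ω) 0 := by
        have := hcoc 0 ((k : ℝ) * ω) (((k : ℝ) + 1) * ω) le_rfl (by positivity) (by nlinarith)
        rw [← this]; congr 1; push_cast; ring
      have h2 : U (((k : ℝ) + 1) * ω) ((k : ℝ) * ω) = C := by
        have h := hshift k 0 ω le_rfl (le_of_lt hω)
        rw [hC, ← h]; congr 1 <;> ring
      rw [h1, h2, ih, ← pow_succ']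
  obtain ⟨c, hc0, ρ, hρ0, hρ1, hCp⟩ := stmt6_pow_decay n hn C heig
  set c₁ := (M ^ 6 * c + M ^ 4) / ρ ^ 2 with hc₁
  have hc₁0 : 0 < c₁ := by positivity
  -- the key discrete-to-continuous bound
  have hmain : ∀ s t : ℝ, 0 ≤ s → s ≤ t → ‖U t s‖ ≤ c₁ * ρ ^ ⌊(t - s) / ω⌋₊ := by
    intro s t hs hst
    set k : ℕ := ⌊(t - s) / ω⌋₊ with hk
    clear_value k
    have hts0 : 0 ≤ t - s := by linarith
    have hk1 : t - s < ((k : ℝ) + 1) * ω := by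
      have h := Nat.lt_floor_add_one ((t - s) / ω)
      rw [← hk] at h
      calc t - s = (t - s) / ω * ω := (div_mul_cancel₀ _ (ne_of_gt hω)).symm
        _ < ((k : ℝ) + 1) * ω := mul_lt_mul_of_pos_right h hω
    have hk0 : (k : ℝ) * ω ≤ t - s := by
      have h := Nat.floor_le (div_nonneg hts0 (le_of_lt hω))
      rw [← hk] at h
      calc (k : ℝ) * ω ≤ (t - s) / ω * ω := mul_le_mul_of_nonneg_right h (le_of_lt hω)
        _ = t - s := div_mul_cancel₀ _ (ne_of_gt hω)
    by_cases hk2 : k < 2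
    · have hgap : t - s ≤ 2 * ω := by
        have : (k : ℝ) + 1 ≤ 2 := by
          have : k ≤ 1 := by omega
          have : (k : ℝ) ≤ 1 := by exact_mod_cast this
          linarith
        nlinarith
      have hb := hwin2 s t hs hst hgap
      have hρk : ρ ^ 2 ≤ ρ ^ k := pow_le_pow_of_le_one (le_of_lt hρ0) (le_of_lt hρ1) (by omega)
      have he : c₁ * ρ ^ 2 = M ^ 6 * c + M ^ 4 := by
        rw [hc₁]; field_simp
      calc ‖U t s‖ ≤ M ^ 4 := hb
        _ ≤ M ^ 6 * c + M ^ 4 := by nlinarith [mul_pos (pow_pos hM 6) hc0]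
        _ = c₁ * ρ ^ 2 := he.symm
        _ ≤ c₁ * ρ ^ k := mul_le_mul_of_nonneg_left hρk (le_of_lt hc₁0)
    · push_neg at hk2
      obtain ⟨k', rfl⟩ : ∃ k', k = k' + 2 := ⟨k - 2, by omega⟩
      set j : ℕ := ⌈s / ω⌉₊ with hjdef
      have hsj : s ≤ (j : ℝ) * ω := by
        have h := Nat.le_ceil (s / ω)
        calc s = s / ω * ω := (div_mul_cancel₀ s (ne_of_gt hω)).symm
          _ ≤ (j : ℝ) * ω := mul_le_mul_of_nonneg_right h (le_of_lt hω)
      have hjs : (j : ℝ) * ω < s + ω := by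
        have h := Nat.ceil_lt_add_one (div_nonneg hs (le_of_lt hω))
        calc (j : ℝ) * ω < (s / ω + 1) * ω := mul_lt_mul_of_pos_right h hω
          _ = s + ω := by field_simp
      set a : ℝ := (j : ℝ) * ω with ha
      set b : ℝ := a + ((k' : ℝ) + 1) * ω with hb
      have hab : a ≤ b := by simp only [hb]; nlinarith
      have hbt : b ≤ t := by
        have hkc : ((k' : ℝ) + 2) * ω ≤ t - s := by
          have : ((k' + 2 : ℕ) : ℝ) = (k' : ℝ) + 2 := by push_cast; ring
          rw [← this]; exact hk0
        simp only [hb, ha]; nlinarith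
      have hsa : s ≤ a := hsj
      have hdec1 : U t s = U t b * U b s := hcoc s b t hs (le_trans hsa hab) hbt
      have hdec2 : U b s = U b a * U a s := hcoc s a b hs hsa hab
      have hUa : ‖U a s‖ ≤ M ^ 2 := hwin1 s a hs hsa (by simp only [ha]; linarith)
      have hUb : U b a = C ^ (k' + 1) := by
        have h := hshift j 0 (((k' : ℝ) + 1) * ω) le_rfl (by positivity)
        have h2 : U (((k' : ℝ) + 1) * ω) 0 = C ^ (k' + 1) := by
          have := hCpow (k' + 1)
          rw [← this]; congr 1; push_cast; ring
        rw [← h2, ← h]; congr 1 <;> (simp only [hb, ha]; ring)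
      have hUbn : ‖U b a‖ ≤ c * ρ ^ (k' + 1) := by rw [hUb]; exact hCp (k' + 1)
      have hUt : ‖U t b‖ ≤ M ^ 4 := by
        refine hwin2 b t (by positivity) hbt ?_
        have hkc : t - s < ((k' : ℝ) + 3) * ω := by
          have : (((k' + 2 : ℕ) : ℝ) + 1) = (k' : ℝ) + 3 := by push_cast; ring
          rw [← this]; exact hk1
        simp only [hb, ha]; nlinarith
      have hcomb : ‖U t s‖ ≤ M ^ 4 * (c * ρ ^ (k' + 1) * M ^ 2) := by
        calc ‖U t s‖ = ‖U t b * (U b a * U a s)‖ := by rw [hdec1, hdec2]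
          _ ≤ ‖U t b‖ * ‖U b a * U a s‖ := norm_mul_le _ _
          _ ≤ ‖U t b‖ * (‖U b a‖ * ‖U a s‖) := by
              refine mul_le_mul_of_nonneg_left (norm_mul_le _ _) (norm_nonneg _)
          _ ≤ M ^ 4 * (c * ρ ^ (k' + 1) * M ^ 2) := by
              refine mul_le_mul hUt ?_ (by positivity) (by positivity)
              exact mul_le_mul hUbn hUa (norm_nonneg _) (by positivity)
      refine le_trans hcomb ?_
      have he : c₁ * ρ ^ (k' + 2) = (M ^ 6 * c + M ^ 4) * ρ ^ k' := by
        rw [hc₁]; field_simp; ring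
      rw [he]
      have hρk : ρ ^ (k' + 1) = ρ ^ k' * ρ := by ring
      have hρle : ρ ^ (k' + 1) ≤ ρ ^ k' := by
        rw [hρk]; nlinarith [pow_nonneg (le_of_lt hρ0) k']
      have h6 : (0 : ℝ) < M ^ 6 * c := mul_pos (pow_pos hM 6) hc0
      calc M ^ 4 * (c * ρ ^ (k' + 1) * M ^ 2) = M ^ 6 * c * ρ ^ (k' + 1) := by ring
        _ ≤ M ^ 6 * c * ρ ^ k' := mul_le_mul_of_nonneg_left hρle (le_of_lt h6)
        _ ≤ (M ^ 6 * c + M ^ 4) * ρ ^ k' := by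
            nlinarith [pow_nonneg (le_of_lt hρ0) k', pow_pos hM 4]
  -- convert to exponential bound
  set α := -Real.log ρ / ω with hα
  have hlog : Real.log ρ < 0 := Real.log_neg hρ0 hρ1
  have hα0 : 0 < α := by
    rw [hα]; exact div_pos (by linarith) hω
  have hexp : ∀ s t : ℝ, 0 ≤ s → s ≤ t →
      c₁ * ρ ^ ⌊(t - s) / ω⌋₊ ≤ c₁ / ρ * Real.exp (-α * (t - s)) := by
    intro s t hs hst
    set k : ℕ := ⌊(t - s) / ω⌋₊ with hk
    have hk1 : (t - s) / ω < (k : ℝ) + 1 := Nat.lt_floor_add_one _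
    have hρk : ρ ^ k = Real.exp ((k : ℝ) * Real.log ρ) := by
      rw [Real.exp_nat_mul, Real.exp_log hρ0]
    have hkk : (t - s) / ω - 1 ≤ (k : ℝ) := by linarith
    have hmono : (k : ℝ) * Real.log ρ ≤ ((t - s) / ω - 1) * Real.log ρ :=
      mul_le_mul_of_nonpos_right hkk (le_of_lt hlog)
    have heq : ((t - s) / ω - 1) * Real.log ρ = -α * (t - s) - Real.log ρ := by
      rw [hα]; field_simp
    calc c₁ * ρ ^ k = c₁ * Real.exp ((k : ℝ) * Real.log ρ) := by rw [hρk]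
      _ ≤ c₁ * Real.exp (((t - s) / ω - 1) * Real.log ρ) := by
          exact mul_le_mul_of_nonneg_left (Real.exp_le_exp.mpr hmono) (le_of_lt hc₁0)
      _ = c₁ / ρ * Real.exp (-α * (t - s)) := by
          rw [heq, Real.exp_sub, Real.exp_log hρ0]; ring
  refine ⟨c₁ / ρ, by positivity, α, hα0, ?_, ?_⟩
  · intro s t hs hst
    exact le_trans (hmain s t hs hst) (hexp s t hs hst)
  · intro x₀ s₀ hs₀ t ht
    have h1 : ‖Matrix.toEuclideanLin (U t s₀) x₀‖ ≤ ‖U t s₀‖ * ‖x₀‖ := by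
      have h := ContinuousLinearMap.le_opNorm
        ((Matrix.toEuclideanLin ≪≫ₗ LinearMap.toContinuousLinearMap) (U t s₀)) x₀
      rw [← Matrix.l2_opNorm_def] at h
      exact h
    have h2 : ‖U t s₀‖ ≤ c₁ / ρ * Real.exp (-α * (t - s₀)) :=
      le_trans (hmain s₀ t hs₀ ht) (hexp s₀ t hs₀ ht)
    calc ‖Matrix.toEuclideanLin (U t s₀) x₀‖ ≤ ‖U t s₀‖ * ‖x₀‖ := h1
      _ ≤ c₁ / ρ * Real.exp (-α * (t - s₀)) * ‖x₀‖ :=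
          mul_le_mul_of_nonneg_right h2 (norm_nonneg _)
      _ = c₁ / ρ * ‖x₀‖ * Real.exp (-α * (t - s₀)) := by ring
end

section
/- Let a : ℝ → ℝ be measurable with |a(t)| ≤ M for all t ≥ 0 and some M > 0, and let α > 0. Assume the average condition: for every ε > 0 there exists T > 0 such that for all 0 ≤ s ≤ t with t - s ≥ T one has ∫_s^t a(r) dr ≤ (-α + ε)(t - s). Then for every α' with 0 < α' < α there exists a constant K₀ ≥ 1 such that exp(∫_s^t a(r) dr) ≤ K₀ · e^{-α'(t-s)} for all 0 ≤ s ≤ t. -/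
/-- If `a` is measurable, bounded by `M` on `[0,∞)`, and satisfies the Bohl-type average
condition with rate `-α`, then for every `0 < α' < α` there is `K₀ ≥ 1` with
`exp (∫_s^t a) ≤ K₀ e^{-α' (t-s)}` for all `0 ≤ s ≤ t`. -/
theorem stmt_10 (a : ℝ → ℝ) (M α : ℝ) (ha : Measurable a) (hM : 0 < M)
    (hbd : ∀ t ≥ (0 : ℝ), |a t| ≤ M) (hα : 0 < α)
    (havg : ∀ ε > (0 : ℝ), ∃ T > (0 : ℝ), ∀ s t : ℝ, 0 ≤ s → s ≤ t → T ≤ t - s →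
      (∫ r in s..t, a r) ≤ (-α + ε) * (t - s)) :
    ∀ α' : ℝ, 0 < α' → α' < α → ∃ K₀ ≥ (1 : ℝ), ∀ s t : ℝ, 0 ≤ s → s ≤ t →
      Real.exp (∫ r in s..t, a r) ≤ K₀ * Real.exp (-α' * (t - s)) := by
  intro α' hα' hα'α
  obtain ⟨T, hT, hTspec⟩ := havg (α - α') (by linarith)
  refine ⟨Real.exp ((M + α') * T), Real.one_le_exp (by positivity), ?_⟩
  intro s t hs hst
  have hK1 : (1 : ℝ) ≤ Real.exp ((M + α') * T) := Real.one_le_exp (by positivity)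
  rcases le_or_gt T (t - s) with h | h
  · have h1 := hTspec s t hs hst h
    have : (-α + (α - α')) * (t - s) = -α' * (t - s) := by ring
    rw [this] at h1
    calc Real.exp (∫ r in s..t, a r) ≤ Real.exp (-α' * (t - s)) := Real.exp_le_exp.mpr h1
      _ ≤ Real.exp ((M + α') * T) * Real.exp (-α' * (t - s)) := by
          nlinarith [Real.exp_pos (-α' * (t - s))]
  · have hbnd : ∀ x ∈ Set.uIoc s t, ‖a x‖ ≤ M := by
      intro x hx
      rw [Set.uIoc_of_le hst] at hx
      exact hbd x (le_trans hs hx.1.le)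
    have hint : |∫ r in s..t, a r| ≤ M * |t - s| :=
      intervalIntegral.norm_integral_le_of_norm_le_const hbnd
    have h2 : (∫ r in s..t, a r) ≤ M * (t - s) := by
      have h2' := (abs_le.mp hint).2
      rwa [abs_of_nonneg (sub_nonneg.mpr hst)] at h2'
    have h3 : M * (t - s) ≤ (M + α') * T + (-α' * (t - s)) := by nlinarith
    calc Real.exp (∫ r in s..t, a r) ≤ Real.exp ((M + α') * T + (-α' * (t - s))) :=
          Real.exp_le_exp.mpr (le_trans h2 h3)
      _ = Real.exp ((M + α') * T) * Real.exp (-α' * (t - s)) := Real.exp_add _ _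
end

section
/- Assume that a is Lebesgue integrable on [0,+∞) and that the series ∑_k |ln|1 + b_k|| is summable. Then there exists a constant C > 0 such that |u(t,s)| ≤ C for all t ≥ s ≥ 0; consequently the trivial solution of the corresponding scalar homogeneous generalized linear differential equation is uniformly stable. -/
/-- The transition function of the scalar impulsive equation `x' = a(t)x`, `Δ⁺x(τ_k) = b_k x(τ_k)`
(equivalently, of the corresponding scalar homogeneous generalized linear differential
equation): `u(t,s) = exp(∫_s^t a) · ∏_{k : τ_k ∈ [s,t)} (1 + b_k)`. -/
noncomputable def transition (a : ℝ → ℝ) (τ b : ℕ → ℝ) (t s : ℝ) : ℝ :=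
  Real.exp (∫ r in s..t, a r) * ∏ᶠ k ∈ {k : ℕ | s ≤ τ k ∧ τ k < t}, (1 + b k)

/-- If `a` is Lebesgue integrable on `[0,∞)` and `∑_k |ln|1+b_k||` is summable, then the
transition function is uniformly bounded; consequently the trivial solution of the
corresponding scalar homogeneous GLDE is uniformly stable. -/
theorem stmt_11 (a : ℝ → ℝ) (τ b : ℕ → ℝ)
    (hτmono : StrictMono τ) (hτpos : ∀ k, 0 < τ k)
    (hτtop : Filter.Tendsto τ Filter.atTop Filter.atTop)
    (hb : ∀ k, 1 + b k ≠ 0)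
    (hint : MeasureTheory.IntegrableOn a (Set.Ici 0))
    (hsum : Summable fun k => |Real.log (|1 + b k|)|) :
    (∃ C > (0 : ℝ), ∀ s t : ℝ, 0 ≤ s → s ≤ t → |transition a τ b t s| ≤ C) ∧
    (∀ ε > (0 : ℝ), ∃ δ > (0 : ℝ), ∀ s₀ ≥ (0 : ℝ), ∀ x₀ : ℝ, |x₀| < δ →
      ∀ t ≥ s₀, |transition a τ b t s₀ * x₀| < ε) := by
  set A := ∫ r in Set.Ici (0:ℝ), |a r| with hA
  set B := ∑' k, |Real.log (|1 + b k|)| with hB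
  set C := Real.exp (A + B) with hC
  have hCpos : 0 < C := Real.exp_pos _
  have key : ∀ s t : ℝ, 0 ≤ s → s ≤ t → |transition a τ b t s| ≤ C := by
    intro s t hs hst
    have habs : MeasureTheory.IntegrableOn (fun r => |a r|) (Set.Ici 0) := hint.abs
    have hsub : Set.Ioc s t ⊆ Set.Ici (0:ℝ) := fun r hr => le_trans hs (le_of_lt hr.1)
    have hIoc : MeasureTheory.IntegrableOn a (Set.Ioc s t) := hint.mono_set hsub
    have h1 : (∫ r in s..t, a r) ≤ A := by
      rw [intervalIntegral.integral_of_le hst]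
      calc ∫ r in Set.Ioc s t, a r ≤ ∫ r in Set.Ioc s t, |a r| :=
            MeasureTheory.integral_mono hIoc hIoc.abs (fun r => le_abs_self _)
        _ ≤ A := MeasureTheory.setIntegral_mono_set habs
            (Filter.Eventually.of_forall fun r => abs_nonneg _)
            (Filter.Eventually.of_forall hsub)
    -- finiteness of the jump set
    obtain ⟨N, hN⟩ := Filter.eventually_atTop.mp (hτtop.eventually_ge_atTop t)
    have hSfin : ({k : ℕ | s ≤ τ k ∧ τ k < t} : Set ℕ).Finite := by
      apply (Set.finite_Iio N).subset
      intro k hk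
      by_contra hkN
      exact absurd (hN k (le_of_not_gt hkN)) (not_le.mpr hk.2)
    have h2 : |∏ᶠ k ∈ {k : ℕ | s ≤ τ k ∧ τ k < t}, (1 + b k)| ≤ Real.exp B := by
      rw [finprod_mem_eq_finite_toFinset_prod _ hSfin, Finset.abs_prod]
      have heq : ∀ k ∈ hSfin.toFinset, |1 + b k| = Real.exp (Real.log (|1 + b k|)) := by
        intro k _
        rw [Real.exp_log (abs_pos.mpr (hb k))]
      rw [Finset.prod_congr rfl heq, ← Real.exp_sum]
      apply Real.exp_le_exp.mpr
      calc ∑ k ∈ hSfin.toFinset, Real.log (|1 + b k|)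
          ≤ ∑ k ∈ hSfin.toFinset, |Real.log (|1 + b k|)| :=
            Finset.sum_le_sum fun k _ => le_abs_self _
        _ ≤ B := Summable.sum_le_tsum _ (fun k _ => abs_nonneg _) hsum
    calc |transition a τ b t s|
        = Real.exp (∫ r in s..t, a r) * |∏ᶠ k ∈ {k : ℕ | s ≤ τ k ∧ τ k < t}, (1 + b k)| := by
          rw [transition, abs_mul, abs_of_pos (Real.exp_pos _)]
      _ ≤ Real.exp A * Real.exp B := by
          apply mul_le_mul (Real.exp_le_exp.mpr h1) h2 (abs_nonneg _) (Real.exp_pos _).le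
      _ = C := by rw [← Real.exp_add]
  refine ⟨⟨C, hCpos, key⟩, ?_⟩
  intro ε hε
  refine ⟨ε / C, div_pos hε hCpos, ?_⟩
  intro s₀ hs₀ x₀ hx₀ t ht
  calc |transition a τ b t s₀ * x₀| = |transition a τ b t s₀| * |x₀| := abs_mul _ _
    _ ≤ C * |x₀| := mul_le_mul_of_nonneg_right (key s₀ t hs₀ ht) (abs_nonneg _)
    _ < C * (ε / C) := (mul_lt_mul_iff_right₀ hCpos).mpr hx₀
    _ = ε := mul_div_cancel₀ _ (ne_of_gt hCpos)
end

section
/- Let 0 < c < ω and let a(t) = -ω - c·t·sin t for all t ≥ 0, and assume that the series ∑_k |ln|1 + b_k|| is summable. Then there exists a constant K > 0 such that |u(t,s)| ≤ K · e^{-(ω-c)(t-s)} · e^{2cs} for all t ≥ s ≥ 0; in particular the trivial solution of the corresponding scalar homogeneous generalized linear differential equation is globally (non uniformly exponentially) asymptotically stable. -/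
/-- For `a(t) = -ω - c t sin t` with `0 < c < ω`, and `∑_k |ln|1+b_k||` summable, the transition
function satisfies `|u(t,s)| ≤ K e^{-(ω-c)(t-s)} e^{2cs}`; in particular the trivial solution of
the corresponding scalar homogeneous GLDE is globally (non uniformly exponentially)
asymptotically stable: it is stable and every solution tends to `0`. -/
theorem stmt_12 (ω c : ℝ) (τ b : ℕ → ℝ) (hc : 0 < c) (hcω : c < ω)
    (hτmono : StrictMono τ) (hτpos : ∀ k, 0 < τ k)
    (hτtop : Filter.Tendsto τ Filter.atTop Filter.atTop)
    (hb : ∀ k, 1 + b k ≠ 0)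
    (hsum : Summable fun k => |Real.log (|1 + b k|)|) :
    (∃ K > (0 : ℝ), ∀ s t : ℝ, 0 ≤ s → s ≤ t →
      |transition (fun r => -ω - c * r * Real.sin r) τ b t s| ≤
        K * Real.exp (-(ω - c) * (t - s)) * Real.exp (2 * c * s)) ∧
    ((∀ s₀ ≥ (0 : ℝ), ∀ ε > (0 : ℝ), ∃ δ > (0 : ℝ), ∀ x₀ : ℝ, |x₀| < δ →
        ∀ t ≥ s₀, |transition (fun r => -ω - c * r * Real.sin r) τ b t s₀ * x₀| < ε) ∧
      (∀ s₀ ≥ (0 : ℝ), ∀ x₀ : ℝ,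
        Filter.Tendsto (fun t => |transition (fun r => -ω - c * r * Real.sin r) τ b t s₀ * x₀|)
          Filter.atTop (nhds 0))) := by
  set M : ℝ := Real.exp (∑' k, |Real.log (|1 + b k|)|) with hM
  have hMpos : 0 < M := Real.exp_pos _
  set K : ℝ := Real.exp (2 * c) * M with hKdef
  have hKpos : 0 < K := mul_pos (Real.exp_pos _) hMpos
  -- main bound
  have hmain : ∀ s t : ℝ, 0 ≤ s → s ≤ t →
      |transition (fun r => -ω - c * r * Real.sin r) τ b t s| ≤
        K * Real.exp (-(ω - c) * (t - s)) * Real.exp (2 * c * s) := by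
    intro s t hs hst
    -- finiteness of the jump set
    have hfin : {k : ℕ | s ≤ τ k ∧ τ k < t}.Finite := by
      obtain ⟨N, hN⟩ := (hτtop.eventually_ge_atTop t).exists_forall_of_atTop
      apply Set.Finite.subset (Set.finite_Iio N)
      intro k hk
      by_contra h
      exact absurd (hN k (le_of_not_gt h)) (not_le.2 hk.2)
    -- product bound
    have hprod : |∏ᶠ k ∈ {k : ℕ | s ≤ τ k ∧ τ k < t}, (1 + b k)| ≤ M := by
      have h1 : ∏ᶠ k ∈ {k : ℕ | s ≤ τ k ∧ τ k < t}, (1 + b k)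
          = ∏ k ∈ hfin.toFinset, (1 + b k) := by
        rw [← finprod_mem_coe_finset, hfin.coe_toFinset]
      rw [h1, Finset.abs_prod]
      have h2 : ∏ k ∈ hfin.toFinset, |1 + b k|
          = Real.exp (∑ k ∈ hfin.toFinset, Real.log (|1 + b k|)) := by
        rw [Real.exp_sum]
        exact Finset.prod_congr rfl fun k _ => (Real.exp_log (abs_pos.2 (hb k))).symm
      rw [h2, hM]
      apply Real.exp_le_exp.2
      calc ∑ k ∈ hfin.toFinset, Real.log (|1 + b k|)
          ≤ ∑ k ∈ hfin.toFinset, |Real.log (|1 + b k|)| :=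
            Finset.sum_le_sum fun k _ => le_abs_self _
        _ ≤ ∑' k, |Real.log (|1 + b k|)| :=
            Summable.sum_le_tsum _ (fun k _ => abs_nonneg _) hsum
    -- integral computation
    have hint : (∫ r in s..t, (-ω - c * r * Real.sin r))
        = (-ω * t - c * (Real.sin t - t * Real.cos t))
          - (-ω * s - c * (Real.sin s - s * Real.cos s)) := by
      apply intervalIntegral.integral_eq_sub_of_hasDerivAt
      · intro x _
        have h1 : HasDerivAt (fun r : ℝ => Real.sin r - r * Real.cos r)
            (x * Real.sin x) x := by
          have := (Real.hasDerivAt_sin x).sub ((hasDerivAt_id x).mul (Real.hasDerivAt_cos x))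
          exact this.congr_deriv (by simp only [id_eq]; ring)
        have h2 : HasDerivAt (fun r : ℝ => -ω * r) (-ω) x := by
          simpa using (hasDerivAt_id x).const_mul (-ω)
        have := h2.sub (h1.const_mul c)
        exact this.congr_deriv (by ring)
      · apply Continuous.intervalIntegrable
        continuity
    -- bound on the integral
    have hexp : (∫ r in s..t, (-ω - c * r * Real.sin r))
        ≤ 2 * c + (-(ω - c) * (t - s)) + 2 * c * s := by
      rw [hint]
      have ht0 : (0:ℝ) ≤ t := le_trans hs hst
      have b1 := Real.neg_one_le_sin t
      have b2 := Real.cos_le_one t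
      have b3 := Real.sin_le_one s
      have b4 := Real.neg_one_le_cos s
      nlinarith [mul_le_mul_of_nonneg_left b2 ht0, mul_le_mul_of_nonneg_left b4 hs]
    -- combine
    unfold transition
    rw [abs_mul, Real.abs_exp]
    have h3 : Real.exp (∫ r in s..t, (-ω - c * r * Real.sin r))
        ≤ Real.exp (2 * c) * Real.exp (-(ω - c) * (t - s)) * Real.exp (2 * c * s) := by
      rw [← Real.exp_add, ← Real.exp_add]
      exact Real.exp_le_exp.2 hexp
    calc Real.exp (∫ r in s..t, (-ω - c * r * Real.sin r))
          * |∏ᶠ k ∈ {k : ℕ | s ≤ τ k ∧ τ k < t}, (1 + b k)|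
        ≤ (Real.exp (2 * c) * Real.exp (-(ω - c) * (t - s)) * Real.exp (2 * c * s)) * M := by
          apply mul_le_mul h3 hprod (abs_nonneg _)
          positivity
      _ = K * Real.exp (-(ω - c) * (t - s)) * Real.exp (2 * c * s) := by
          rw [hKdef]; ring
  refine ⟨⟨K, hKpos, hmain⟩, ?_, ?_⟩
  · -- stability
    intro s₀ hs₀ ε hε
    set C : ℝ := K * Real.exp (2 * c * s₀) with hCdef
    have hCpos : 0 < C := mul_pos hKpos (Real.exp_pos _)
    refine ⟨ε / C, div_pos hε hCpos, ?_⟩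
    intro x₀ hx₀ t ht
    rw [abs_mul]
    have h1 : |transition (fun r => -ω - c * r * Real.sin r) τ b t s₀| ≤ C := by
      calc |transition (fun r => -ω - c * r * Real.sin r) τ b t s₀|
          ≤ K * Real.exp (-(ω - c) * (t - s₀)) * Real.exp (2 * c * s₀) :=
            hmain s₀ t hs₀ ht
        _ ≤ K * 1 * Real.exp (2 * c * s₀) := by
            have : Real.exp (-(ω - c) * (t - s₀)) ≤ 1 := by
              apply Real.exp_le_one_iff.2
              nlinarith
            gcongr
        _ = C := by rw [hCdef]; ring
    calc |transition (fun r => -ω - c * r * Real.sin r) τ b t s₀| * |x₀|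
        ≤ C * |x₀| := mul_le_mul_of_nonneg_right h1 (abs_nonneg _)
      _ < C * (ε / C) := by
          apply mul_lt_mul_of_pos_left hx₀ hCpos
      _ = ε := by field_simp
  · -- attractivity
    intro s₀ hs₀ x₀
    have hg : Filter.Tendsto
        (fun t => (K * Real.exp (2 * c * s₀) * |x₀|) * Real.exp (-(ω - c) * (t - s₀)))
        Filter.atTop (nhds 0) := by
      have h1 : Filter.Tendsto (fun t : ℝ => -(ω - c) * (t - s₀)) Filter.atTop Filter.atBot := by
        apply Filter.Tendsto.const_mul_atTop_of_neg (by linarith : -(ω - c) < 0)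
        exact Filter.tendsto_atTop_add_const_right _ _ Filter.tendsto_id
      have h2 := Real.tendsto_exp_atBot.comp h1
      simpa using h2.const_mul (K * Real.exp (2 * c * s₀) * |x₀|)
    apply squeeze_zero' (Filter.Eventually.of_forall fun t => abs_nonneg _) _ hg
    filter_upwards [Filter.eventually_ge_atTop s₀] with t ht
    rw [abs_mul]
    calc |transition (fun r => -ω - c * r * Real.sin r) τ b t s₀| * |x₀|
        ≤ (K * Real.exp (-(ω - c) * (t - s₀)) * Real.exp (2 * c * s₀)) * |x₀| :=
          mul_le_mul_of_nonneg_right (hmain s₀ t hs₀ ht) (abs_nonneg _)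
      _ = (K * Real.exp (2 * c * s₀) * |x₀|) * Real.exp (-(ω - c) * (t - s₀)) := by ring
end

section
/- Let α > 0. Assume that a is measurable with |a(t)| ≤ M for all t ≥ 0 and some M > 0, that a satisfies the average condition: for every ε > 0 there exists T > 0 such that for all 0 ≤ s ≤ t with t - s ≥ T one has ∫_s^t a(r) dr ≤ (-α + ε)(t - s), and that the series ∑_k |ln|1 + b_k|| is summable. Then for every α' with 0 < α' < α there exists a constant K > 0 such that |u(t,s)| ≤ K · e^{-α'(t-s)} for all t ≥ s ≥ 0; in particular the trivial solution of the corresponding scalar homogeneous generalized linear differential equation is uniformly asymptotically stable. -/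
/-- If `a` is measurable and bounded, satisfies the Bohl-type average condition with rate `-α`,
and `∑_k |ln|1+b_k||` is summable, then for every `0 < α' < α` the transition function admits a
uniform exponential bound with rate `α'`; in particular the trivial solution of the
corresponding scalar homogeneous GLDE is uniformly asymptotically stable. -/
theorem stmt_13 (a : ℝ → ℝ) (τ b : ℕ → ℝ) (M α : ℝ)
    (ha : Measurable a) (hM : 0 < M) (hbd : ∀ t ≥ (0 : ℝ), |a t| ≤ M) (hα : 0 < α)
    (havg : ∀ ε > (0 : ℝ), ∃ T > (0 : ℝ), ∀ s t : ℝ, 0 ≤ s → s ≤ t → T ≤ t - s →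
      (∫ r in s..t, a r) ≤ (-α + ε) * (t - s))
    (hτmono : StrictMono τ) (hτpos : ∀ k, 0 < τ k)
    (hτtop : Filter.Tendsto τ Filter.atTop Filter.atTop)
    (hb : ∀ k, 1 + b k ≠ 0)
    (hsum : Summable fun k => |Real.log (|1 + b k|)|) :
    (∀ α' : ℝ, 0 < α' → α' < α → ∃ K > (0 : ℝ), ∀ s t : ℝ, 0 ≤ s → s ≤ t →
      |transition a τ b t s| ≤ K * Real.exp (-α' * (t - s))) ∧
    ((∀ ε > (0 : ℝ), ∃ δ > (0 : ℝ), ∀ s₀ ≥ (0 : ℝ), ∀ x₀ : ℝ, |x₀| < δ →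
        ∀ t ≥ s₀, |transition a τ b t s₀ * x₀| < ε) ∧
      (∃ δ₀ > (0 : ℝ), ∀ ε > (0 : ℝ), ∃ T ≥ (0 : ℝ), ∀ s₀ ≥ (0 : ℝ), ∀ x₀ : ℝ, |x₀| < δ₀ →
        ∀ t ≥ s₀ + T, |transition a τ b t s₀ * x₀| < ε)) := by
    -- Bound on the impulsive product
  have hC : ∀ s t : ℝ,
      |∏ᶠ k ∈ {k : ℕ | s ≤ τ k ∧ τ k < t}, (1 + b k)| ≤
        Real.exp (∑' k, |Real.log (|1 + b k|)|) := by
    intro s t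
    obtain ⟨n, hn⟩ := Filter.eventually_atTop.mp (hτtop.eventually_ge_atTop t)
    have hfin : ({k : ℕ | s ≤ τ k ∧ τ k < t}).Finite := by
      apply (Set.finite_Iio n).subset
      intro k hk
      by_contra hkn
      exact absurd (hn k (le_of_not_gt hkn)) (not_le.mpr hk.2)
    rw [finprod_mem_eq_finite_toFinset_prod _ hfin, Finset.abs_prod]
    calc ∏ i ∈ hfin.toFinset, |1 + b i|
        ≤ ∏ i ∈ hfin.toFinset, Real.exp (|Real.log (|1 + b i|)|) := by
          apply Finset.prod_le_prod (fun i _ => abs_nonneg _)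
          intro i _
          nth_rewrite 1 [← Real.exp_log (abs_pos.mpr (hb i))]
          exact Real.exp_le_exp.mpr (le_abs_self _)
      _ = Real.exp (∑ i ∈ hfin.toFinset, |Real.log (|1 + b i|)|) := (Real.exp_sum _ _).symm
      _ ≤ Real.exp (∑' k, |Real.log (|1 + b k|)|) :=
          Real.exp_le_exp.mpr (Summable.sum_le_tsum _ (fun i _ => abs_nonneg _) hsum)
  -- Main exponential bound
  have main : ∀ α' : ℝ, 0 < α' → α' < α → ∃ K > (0 : ℝ), ∀ s t : ℝ, 0 ≤ s → s ≤ t →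
      |transition a τ b t s| ≤ K * Real.exp (-α' * (t - s)) := by
    intro α' hα'0 hα'α
    obtain ⟨T, hT0, hT⟩ := havg (α - α') (by linarith)
    refine ⟨Real.exp (∑' k, |Real.log (|1 + b k|)|) * Real.exp ((M + α') * T),
      by positivity, ?_⟩
    intro s t hs hst
    have hint : (∫ r in s..t, a r) ≤ (M + α') * T - α' * (t - s) := by
      rcases le_or_gt T (t - s) with h | h
      · have h1 := hT s t hs hst h
        have h2 : (-α + (α - α')) * (t - s) = -α' * (t - s) := by ring
        have h3 : 0 ≤ (M + α') * T := le_of_lt (mul_pos (by linarith) hT0)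
        linarith
      · have habs : ‖∫ r in s..t, a r‖ ≤ M * |t - s| := by
          apply intervalIntegral.norm_integral_le_of_norm_le_const
          intro x hx
          rw [Set.uIoc_of_le hst] at hx
          simpa using hbd x (le_of_lt (lt_of_le_of_lt hs hx.1))
        rw [Real.norm_eq_abs] at habs
        rw [abs_of_nonneg (by linarith : (0:ℝ) ≤ t - s)] at habs
        have h1 := (le_abs_self (∫ r in s..t, a r)).trans habs
        nlinarith [mul_lt_mul_of_pos_left h (show (0:ℝ) < M + α' by linarith)]
    unfold transition
    rw [abs_mul, Real.abs_exp]
    calc Real.exp (∫ r in s..t, a r) * |∏ᶠ k ∈ {k : ℕ | s ≤ τ k ∧ τ k < t}, (1 + b k)|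
        ≤ Real.exp ((M + α') * T - α' * (t - s)) *
            Real.exp (∑' k, |Real.log (|1 + b k|)|) :=
          mul_le_mul (Real.exp_le_exp.mpr hint) (hC s t) (abs_nonneg _) (Real.exp_nonneg _)
      _ = Real.exp (∑' k, |Real.log (|1 + b k|)|) * Real.exp ((M + α') * T) *
            Real.exp (-α' * (t - s)) := by
          rw [← Real.exp_add, ← Real.exp_add, ← Real.exp_add]
          ring_nf
  refine ⟨main, ?_, ?_⟩
  · -- uniform stability
    obtain ⟨K, hK, hKb⟩ := main (α / 2) (by linarith) (by linarith)
    intro ε hε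
    refine ⟨ε / K, by positivity, ?_⟩
    intro s₀ hs₀ x₀ hx₀ t ht
    have h1 := hKb s₀ t hs₀ ht
    have h2 : Real.exp (-(α / 2) * (t - s₀)) ≤ 1 := by
      rw [Real.exp_le_one_iff]
      nlinarith
    have h3 : |transition a τ b t s₀| ≤ K := by
      calc |transition a τ b t s₀| ≤ K * Real.exp (-(α / 2) * (t - s₀)) := h1
        _ ≤ K * 1 := by nlinarith
        _ = K := mul_one K
    calc |transition a τ b t s₀ * x₀| = |transition a τ b t s₀| * |x₀| := abs_mul _ _
      _ ≤ K * |x₀| := mul_le_mul_of_nonneg_right h3 (abs_nonneg _)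
      _ < K * (ε / K) := by exact mul_lt_mul_of_pos_left hx₀ hK
      _ = ε := by field_simp
  · -- uniform attractivity
    obtain ⟨K, hK, hKb⟩ := main (α / 2) (by linarith) (by linarith)
    refine ⟨1, one_pos, ?_⟩
    intro ε hε
    refine ⟨max 0 (Real.log (K / ε) / (α / 2)), le_max_left _ _, ?_⟩
    intro s₀ hs₀ x₀ hx₀ t ht
    set T := max 0 (Real.log (K / ε) / (α / 2)) with hTdef
    have hts : T ≤ t - s₀ := by linarith [ht]
    have hlog : Real.log (K / ε) ≤ (α / 2) * T := by
      have : Real.log (K / ε) / (α / 2) ≤ T := le_max_right _ _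
      calc Real.log (K / ε) = (α / 2) * (Real.log (K / ε) / (α / 2)) := by
            field_simp
        _ ≤ (α / 2) * T := mul_le_mul_of_nonneg_left this (by linarith)
    have hexp : Real.exp (-(α / 2) * (t - s₀)) ≤ ε / K := by
      have h4 : -(α / 2) * (t - s₀) ≤ Real.log (ε / K) := by
        rw [Real.log_div (ne_of_gt hε) (ne_of_gt hK)]
        have h5 : Real.log ε - Real.log K = -(Real.log (K / ε)) := by
          rw [Real.log_div (ne_of_gt hK) (ne_of_gt hε)]; ring
        have h6 : (α / 2) * T ≤ (α / 2) * (t - s₀) :=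
          mul_le_mul_of_nonneg_left hts (by linarith)
        linarith
      calc Real.exp (-(α / 2) * (t - s₀)) ≤ Real.exp (Real.log (ε / K)) :=
            Real.exp_le_exp.mpr h4
        _ = ε / K := Real.exp_log (by positivity)
    have h7 : K * Real.exp (-(α / 2) * (t - s₀)) ≤ ε := by
      calc K * Real.exp (-(α / 2) * (t - s₀)) ≤ K * (ε / K) :=
            mul_le_mul_of_nonneg_left hexp (le_of_lt hK)
        _ = ε := by field_simp
    have h8 := hKb s₀ t hs₀ (by linarith [le_max_left (0:ℝ) (Real.log (K / ε) / (α / 2))])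
    calc |transition a τ b t s₀ * x₀| = |transition a τ b t s₀| * |x₀| := abs_mul _ _
      _ ≤ (K * Real.exp (-(α / 2) * (t - s₀))) * |x₀| :=
          mul_le_mul_of_nonneg_right h8 (abs_nonneg _)
      _ ≤ ε * |x₀| := mul_le_mul_of_nonneg_right h7 (abs_nonneg _)
      _ < ε * 1 := mul_lt_mul_of_pos_left hx₀ hε
      _ = ε := mul_one ε
end

section
/- Assume that a(t) ≥ 0 for all t ≥ 0 and a is Lebesgue integrable on [0,+∞); that there exists c > 0 such that for all indices j < i one has (i - j)/(τ_{i+1} - τ_j) ≥ c (equivalently τ_{i+1} - τ_j ≤ (i - j)/c); and that there exist θ, η ∈ (0,1) with η < |1 + b_k| ≤ θ for all k. Then there exist constants N > 0 and α₀ > 0 such that |u(t,s)| ≤ N · e^{-α₀(t-s)} for all t ≥ s ≥ 0; in particular the trivial solution of the corresponding scalar homogeneous generalized linear differential equation is uniformly asymptotically stable. -/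
/-- If `a ≥ 0` is Lebesgue integrable on `[0,∞)`, the impulse times satisfy
`(i - j)/(τ_{i+1} - τ_j) ≥ c > 0` for all `j < i`, and `η < |1 + b_k| ≤ θ` with `θ, η ∈ (0,1)`,
then the transition function admits a uniform exponential bound; in particular the trivial
solution of the corresponding scalar homogeneous GLDE is uniformly asymptotically stable. -/
theorem stmt_14 (a : ℝ → ℝ) (τ b : ℕ → ℝ)
    (hτmono : StrictMono τ) (hτpos : ∀ k, 0 < τ k)
    (hτtop : Filter.Tendsto τ Filter.atTop Filter.atTop)
    (hb : ∀ k, 1 + b k ≠ 0)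
    (hapos : ∀ t ≥ (0 : ℝ), 0 ≤ a t)
    (hint : MeasureTheory.IntegrableOn a (Set.Ici 0))
    (c : ℝ) (hc : 0 < c)
    (hgap : ∀ i j : ℕ, j < i → c ≤ ((i : ℝ) - (j : ℝ)) / (τ (i + 1) - τ j))
    (θ η : ℝ) (hθ0 : 0 < θ) (hθ1 : θ < 1) (hη0 : 0 < η) (hη1 : η < 1)
    (hbk : ∀ k, η < |1 + b k| ∧ |1 + b k| ≤ θ) :
    (∃ N > (0 : ℝ), ∃ α₀ > (0 : ℝ), ∀ s t : ℝ, 0 ≤ s → s ≤ t →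
      |transition a τ b t s| ≤ N * Real.exp (-α₀ * (t - s))) ∧
    ((∀ ε > (0 : ℝ), ∃ δ > (0 : ℝ), ∀ s₀ ≥ (0 : ℝ), ∀ x₀ : ℝ, |x₀| < δ →
        ∀ t ≥ s₀, |transition a τ b t s₀ * x₀| < ε) ∧
      (∃ δ₀ > (0 : ℝ), ∀ ε > (0 : ℝ), ∃ T ≥ (0 : ℝ), ∀ s₀ ≥ (0 : ℝ), ∀ x₀ : ℝ, |x₀| < δ₀ →
        ∀ t ≥ s₀ + T, |transition a τ b t s₀ * x₀| < ε)) := by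
  classical
  have hlogθ : Real.log θ < 0 := Real.log_neg hθ0 hθ1
  set A : ℝ := ∫ r in Set.Ici (0:ℝ), a r with hAdef
  set α₀ : ℝ := -(c * Real.log θ) with hα₀def
  have hα₀ : 0 < α₀ := by
    have := mul_neg_of_pos_of_neg hc hlogθ
    simp only [hα₀def]; linarith
  set N : ℝ := Real.exp A * Real.exp (-(c * τ 0 + 1) * Real.log θ) with hNdef
  have hN : 0 < N := mul_pos (Real.exp_pos _) (Real.exp_pos _)
  have H' : ∀ m n : ℕ, m ≤ n → c * (τ (n+1) - τ m) ≤ (n : ℝ) - m + 1 := by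
    intro m n hmn
    have h1 := hgap (n+1) m (by omega)
    have hpos : 0 < τ (n+1+1) - τ m := sub_pos.2 (hτmono (by omega))
    rw [le_div_iff₀ hpos] at h1
    have h2 : τ (n+1) ≤ τ (n+1+1) := (hτmono (by omega)).le
    push_cast at h1
    nlinarith [hc.le]
  have key : ∀ s t : ℝ, 0 ≤ s → s ≤ t →
      |transition a τ b t s| ≤ N * Real.exp (-α₀ * (t - s)) := by
    intro s t hs0 hst
    have hJex : ∃ k, s ≤ τ k := (hτtop.eventually (Filter.eventually_ge_atTop s)).exists
    have hKex : ∃ k, t ≤ τ k := (hτtop.eventually (Filter.eventually_ge_atTop t)).exists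
    set J := Nat.find hJex with hJdef
    set K := Nat.find hKex with hKdef
    have hτJ : s ≤ τ J := Nat.find_spec hJex
    have hτK : t ≤ τ K := Nat.find_spec hKex
    have hJK : J ≤ K := Nat.find_min' hJex (le_trans hst hτK)
    have hSeq : {k : ℕ | s ≤ τ k ∧ τ k < t} = ↑(Finset.Ico J K) := by
      ext k
      simp only [Set.mem_setOf_eq, Finset.coe_Ico, Set.mem_Ico]
      constructor
      · rintro ⟨h1, h2⟩
        refine ⟨Nat.find_min' hJex h1, ?_⟩
        by_contra h
        push_neg at h
        exact absurd (le_trans hτK (hτmono.monotone h)) (not_le.2 h2)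
      · rintro ⟨h1, h2⟩
        refine ⟨le_trans hτJ (hτmono.monotone h1), ?_⟩
        by_contra h
        push_neg at h
        exact absurd (Nat.find_min' hKex h) (not_le.2 h2)
    have hcτ0 : 0 ≤ c * τ 0 := mul_nonneg hc.le (hτpos 0).le
    have hcount : c * (t - s) ≤ c * τ 0 + ((K - J : ℕ) : ℝ) + 1 := by
      rcases Nat.eq_zero_or_pos J with hJ0 | hJpos
      · rcases Nat.eq_zero_or_pos K with hK0 | hKpos
        · have ht0 : t ≤ τ 0 := hK0 ▸ hτK
          have h2 : c * (t - s) ≤ c * τ 0 :=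
            mul_le_mul_of_nonneg_left (by linarith) hc.le
          have hcast : (0:ℝ) ≤ ((K - J:ℕ):ℝ) := Nat.cast_nonneg _
          linarith
        · obtain ⟨m, hm⟩ : ∃ m, K = m + 1 := ⟨K - 1, by omega⟩
          have h1 := H' 0 m (Nat.zero_le m)
          have h2 : c * (t - s) ≤ c * τ (m+1) := by
            rw [hm] at hτK
            exact mul_le_mul_of_nonneg_left (by linarith) hc.le
          have hcast : ((K - J:ℕ):ℝ) = (m:ℝ) + 1 := by
            rw [hm, hJ0, Nat.sub_zero]; push_cast; ring
          rw [hcast]; push_cast at h1; linarith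
      · obtain ⟨p, hp⟩ : ∃ p, J = p + 1 := ⟨J - 1, by omega⟩
        have hτp : τ p < s := by
          have h := Nat.find_min hJex (show p < J by omega)
          push_neg at h; exact h
        obtain ⟨m, hm⟩ : ∃ m, K = m + 1 := ⟨K - 1, by omega⟩
        have hpm : p ≤ m := by omega
        have h1 := H' p m hpm
        have h2 : c * (t - s) ≤ c * (τ (m+1) - τ p) := by
          rw [hm] at hτK
          exact mul_le_mul_of_nonneg_left (by linarith) hc.le
        have hcast : ((K - J:ℕ):ℝ) = (m:ℝ) - p := by
          rw [hm, hp, show m + 1 - (p+1) = m - p by omega, Nat.cast_sub hpm]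
        rw [hcast]; linarith
    have hI : (∫ r in s..t, a r) ≤ A := by
      rw [intervalIntegral.integral_of_le hst, hAdef]
      refine MeasureTheory.setIntegral_mono_set hint ?_ ?_
      · exact (MeasureTheory.ae_restrict_iff' measurableSet_Ici).2
          (Filter.Eventually.of_forall fun x hx => hapos x hx)
      · exact Filter.Eventually.of_forall fun x hx =>
          le_trans hs0 (Set.mem_Ioc.1 hx).1.le
    have hprod : |∏ k ∈ Finset.Ico J K, (1 + b k)| ≤ θ ^ (K - J) := by
      rw [Finset.abs_prod]
      calc ∏ k ∈ Finset.Ico J K, |1 + b k| ≤ ∏ _k ∈ Finset.Ico J K, θ :=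
            Finset.prod_le_prod (fun k _ => abs_nonneg _) (fun k _ => (hbk k).2)
        _ = θ ^ (K - J) := by rw [Finset.prod_const, Nat.card_Ico]
    have hpow : θ ^ (K - J) ≤ Real.exp ((c * (t - s) - c * τ 0 - 1) * Real.log θ) := by
      have h1 : θ ^ (K - J) = Real.exp (((K - J : ℕ):ℝ) * Real.log θ) := by
        rw [← Real.exp_log (pow_pos hθ0 (K - J)), Real.log_pow]
      rw [h1, Real.exp_le_exp]
      have h2 : c * (t - s) - c * τ 0 - 1 ≤ ((K - J : ℕ):ℝ) := by linarith
      exact mul_le_mul_of_nonpos_right h2 hlogθ.le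
    have habs : |transition a τ b t s|
        = Real.exp (∫ r in s..t, a r) * |∏ k ∈ Finset.Ico J K, (1 + b k)| := by
      rw [transition, hSeq, finprod_mem_coe_finset, abs_mul, Real.abs_exp]
    rw [habs]
    calc Real.exp (∫ r in s..t, a r) * |∏ k ∈ Finset.Ico J K, (1 + b k)|
        ≤ Real.exp A * Real.exp ((c * (t - s) - c * τ 0 - 1) * Real.log θ) :=
          mul_le_mul (Real.exp_le_exp.2 hI) (hprod.trans hpow) (abs_nonneg _)
            (Real.exp_pos _).le
      _ = N * Real.exp (-α₀ * (t - s)) := by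
          rw [hNdef, hα₀def, mul_assoc, ← Real.exp_add, ← Real.exp_add,
            ← Real.exp_add, Real.exp_eq_exp]
          ring
  refine ⟨⟨N, hN, α₀, hα₀, key⟩, ?_, ?_⟩
  · intro ε hε
    refine ⟨ε / N, div_pos hε hN, ?_⟩
    intro s₀ hs₀ x₀ hx₀ t ht
    have h1 := key s₀ t hs₀ ht
    have h2 : Real.exp (-α₀ * (t - s₀)) ≤ 1 := by
      rw [Real.exp_le_one_iff]; nlinarith
    have h3 : |transition a τ b t s₀| ≤ N := by nlinarith [Real.exp_pos (-α₀ * (t - s₀))]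
    calc |transition a τ b t s₀ * x₀| = |transition a τ b t s₀| * |x₀| := abs_mul _ _
      _ ≤ N * |x₀| := mul_le_mul_of_nonneg_right h3 (abs_nonneg _)
      _ < N * (ε / N) := mul_lt_mul_of_pos_left hx₀ hN
      _ = ε := by field_simp
  · refine ⟨1, one_pos, ?_⟩
    intro ε hε
    refine ⟨max 0 (Real.log (N / ε) / α₀), le_max_left _ _, ?_⟩
    intro s₀ hs₀ x₀ hx₀ t ht
    set T := max 0 (Real.log (N / ε) / α₀) with hTd
    have hT0 : 0 ≤ T := le_max_left _ _
    have h1 := key s₀ t hs₀ (by linarith)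
    have h2 : Real.exp (-α₀ * (t - s₀)) ≤ Real.exp (-α₀ * T) := by
      rw [Real.exp_le_exp]; nlinarith
    have h3 : N * Real.exp (-α₀ * T) ≤ ε := by
      have hlog : Real.log (N / ε) / α₀ ≤ T := le_max_right _ _
      have h4 : Real.log (N / ε) ≤ α₀ * T := by
        rw [div_le_iff₀ hα₀] at hlog; linarith
      have h5 : Real.exp (-α₀ * T) ≤ ε / N := by
        calc Real.exp (-α₀ * T) ≤ Real.exp (-(Real.log (N / ε))) := by
              rw [Real.exp_le_exp]; linarith
          _ = ε / N := by
              rw [Real.exp_neg, Real.exp_log (div_pos hN hε), inv_div]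
      calc N * Real.exp (-α₀ * T) ≤ N * (ε / N) := mul_le_mul_of_nonneg_left h5 hN.le
        _ = ε := by field_simp
    calc |transition a τ b t s₀ * x₀| = |transition a τ b t s₀| * |x₀| := abs_mul _ _
      _ ≤ (N * Real.exp (-α₀ * (t - s₀))) * |x₀| :=
          mul_le_mul_of_nonneg_right h1 (abs_nonneg _)
      _ ≤ (N * Real.exp (-α₀ * T)) * |x₀| :=
          mul_le_mul_of_nonneg_right (mul_le_mul_of_nonneg_left h2 hN.le) (abs_nonneg _)
      _ < (N * Real.exp (-α₀ * T)) * 1 :=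
          mul_lt_mul_of_pos_left hx₀ (mul_pos hN (Real.exp_pos _))
      _ ≤ ε := by rw [mul_one]; exact h3
end
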